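/- arXiv:2109.00464 — 6 statements merged into one kernel-verified Lean document; each statement's English description precedes it below -/
import Mathlib

section
/- There exists no strict 𝓕₀-identification function for the mode; that is, the mode is not identifiable relative to the class 𝓕₀ of strictly unimodal distributions with continuous Lebesgue density. -/
open MeasureTheory Set Filter

/-- `f` belongs to `𝓕₀` with mode `x₀`: continuous, nonnegative, integrates to 1,
nondecreasing on `(-∞, x₀]`, nonincreasing on `[x₀, ∞)`, and `x₀` is the unique
local (hence global) maximum. -/
def IsUnimodalDensity (f : ℝ → ℝ) (x₀ : ℝ) : Prop :=
  Continuous f ∧ (∀ y, 0 ≤ f y) ∧ (∫ y : ℝ, f y) = 1 ∧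
    MonotoneOn f (Set.Iic x₀) ∧ AntitoneOn f (Set.Ici x₀) ∧
    ∀ x, x ≠ x₀ → f x < f x₀

/-- `f` belongs to the class `𝓕₀` of strictly unimodal distributions with
continuous Lebesgue density. -/
def MemF0 (f : ℝ → ℝ) : Prop := ∃ x₀, IsUnimodalDensity f x₀

/-- `s` is a strictly `𝓕₀`-consistent scoring function for the mode. -/
def StrictlyF0Consistent (s : ℝ × ℝ → ℝ) : Prop :=
  Measurable s ∧
  (∀ x : ℝ, ∀ f : ℝ → ℝ, MemF0 f → Integrable (fun y => |s (x, y)| * f y)) ∧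
  (∀ f : ℝ → ℝ, ∀ t : ℝ, IsUnimodalDensity f t → ∀ x : ℝ,
    (∫ y : ℝ, s (t, y) * f y) ≤ (∫ y : ℝ, s (x, y) * f y) ∧
    ((∫ y : ℝ, s (t, y) * f y) = (∫ y : ℝ, s (x, y) * f y) → x = t))

/-- `v` is a strict `𝓕₀`-identification function for the mode. -/
def StrictF0Identification (v : ℝ × ℝ → ℝ) : Prop :=
  Measurable v ∧
  (∀ x : ℝ, ∀ f : ℝ → ℝ, MemF0 f → Integrable (fun y => |v (x, y)| * f y)) ∧
  (∀ f : ℝ → ℝ, ∀ t : ℝ, IsUnimodalDensity f t → ∀ x : ℝ,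
    (∫ y : ℝ, v (x, y) * f y) = 0 ↔ x = t)

/- ### Auxiliary constructions -/

/-- A triangular density with peak at `0`, support `[-1,1]`, height `1`. -/
noncomputable def fTri : ℝ → ℝ := fun y => max 0 (1 - |y|)

/-- A wide triangular density with peak at `1`, support `[-1,3]`, height `1/2`. -/
noncomputable def gTri : ℝ → ℝ := fun y => (1/2) * max 0 (1 - |y - 1| / 2)

lemma lin_int (p q a b : ℝ) : ∫ y in a..b, (p + q*y) = p*(b-a) + q*(b^2-a^2)/2 := by
  rw [intervalIntegral.integral_add (f := fun _ => p) (g := fun y => q * y) (continuous_const.intervalIntegrable _ _)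
    ((continuous_const.mul continuous_id').intervalIntegrable _ _),
    intervalIntegral.integral_const_mul, integral_id, intervalIntegral.integral_const]
  simp only [smul_eq_mul]
  ring

lemma fTri_cont : Continuous fTri :=
  continuous_const.max (continuous_const.sub continuous_abs)

lemma gTri_cont : Continuous gTri :=
  continuous_const.mul (continuous_const.max (by fun_prop))

lemma fTri_nonneg (y : ℝ) : 0 ≤ fTri y := le_max_left _ _

lemma gTri_nonneg (y : ℝ) : 0 ≤ gTri y :=
  mul_nonneg (by norm_num) (le_max_left _ _)

lemma fTri_eq {y : ℝ} (h : |y| ≤ 1) : fTri y = 1 - |y| :=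
  max_eq_right (by linarith)

lemma fTri_zero {y : ℝ} (h : 1 ≤ |y|) : fTri y = 0 :=
  max_eq_left (by linarith)

lemma gTri_eq {y : ℝ} (h : |y - 1| ≤ 2) : gTri y = (1/2) * (1 - |y - 1| / 2) := by
  unfold gTri; rw [max_eq_right (by linarith)]

lemma gTri_zero {y : ℝ} (h : 2 ≤ |y - 1|) : gTri y = 0 := by
  unfold gTri; rw [max_eq_left (by linarith), mul_zero]

lemma fTri_integral : (∫ y : ℝ, fTri y) = 1 := by
  have hsupp : Function.support fTri ⊆ Set.Ioc (-1 : ℝ) 1 := by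
    intro y hy
    simp only [Function.mem_support, ne_eq] at hy
    have h1 : |y| < 1 := by
      by_contra h
      push_neg at h
      exact hy (fTri_zero h)
    rw [abs_lt] at h1
    exact ⟨h1.1, h1.2.le⟩
  rw [← intervalIntegral.integral_eq_integral_of_support_subset hsupp,
    ← intervalIntegral.integral_add_adjacent_intervals (a := (-1:ℝ)) (b := 0) (c := 1)
      (fTri_cont.intervalIntegrable _ _) (fTri_cont.intervalIntegrable _ _)]
  have e1 : (∫ y in (-1:ℝ)..0, fTri y) = ∫ y in (-1:ℝ)..0, (1 + 1*y) := by
    apply intervalIntegral.integral_congr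
    intro y hy
    rw [Set.uIcc_of_le (by norm_num)] at hy
    obtain ⟨h1, h2⟩ := hy
    rw [fTri_eq (abs_le.mpr ⟨h1, by linarith⟩), abs_of_nonpos h2]
    ring
  have e2 : (∫ y in (0:ℝ)..1, fTri y) = ∫ y in (0:ℝ)..1, (1 + (-1)*y) := by
    apply intervalIntegral.integral_congr
    intro y hy
    rw [Set.uIcc_of_le (by norm_num)] at hy
    obtain ⟨h1, h2⟩ := hy
    rw [fTri_eq (abs_le.mpr ⟨by linarith, h2⟩), abs_of_nonneg h1]
    ring
  rw [e1, e2, lin_int, lin_int]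
  norm_num

lemma gTri_integral : (∫ y : ℝ, gTri y) = 1 := by
  have hsupp : Function.support gTri ⊆ Set.Ioc (-1 : ℝ) 3 := by
    intro y hy
    simp only [Function.mem_support, ne_eq] at hy
    have h1 : |y - 1| < 2 := by
      by_contra h
      push_neg at h
      exact hy (gTri_zero h)
    rw [abs_lt] at h1
    constructor <;> [linarith [h1.1]; linarith [h1.2]]
  rw [← intervalIntegral.integral_eq_integral_of_support_subset hsupp,
    ← intervalIntegral.integral_add_adjacent_intervals (a := (-1:ℝ)) (b := 1) (c := 3)
      (gTri_cont.intervalIntegrable _ _) (gTri_cont.intervalIntegrable _ _)]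
  have e1 : (∫ y in (-1:ℝ)..1, gTri y) = ∫ y in (-1:ℝ)..1, (1/4 + (1/4)*y) := by
    apply intervalIntegral.integral_congr
    intro y hy
    rw [Set.uIcc_of_le (by norm_num)] at hy
    obtain ⟨h1, h2⟩ := hy
    rw [gTri_eq (abs_le.mpr ⟨by linarith, by linarith⟩), abs_of_nonpos (by linarith)]
    ring
  have e2 : (∫ y in (1:ℝ)..3, gTri y) = ∫ y in (1:ℝ)..3, (3/4 + (-(1/4))*y) := by
    apply intervalIntegral.integral_congr
    intro y hy
    rw [Set.uIcc_of_le (by norm_num)] at hy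
    obtain ⟨h1, h2⟩ := hy
    rw [gTri_eq (abs_le.mpr ⟨by linarith, by linarith⟩), abs_of_nonneg (by linarith)]
    ring
  rw [e1, e2, lin_int, lin_int]
  norm_num

lemma fTri_compactSupport : HasCompactSupport fTri := by
  apply HasCompactSupport.intro (isCompact_Icc (a := (-1:ℝ)) (b := 1))
  intro y hy
  simp only [Set.mem_Icc, not_and_or, not_le] at hy
  apply fTri_zero
  rcases hy with h | h
  · rw [abs_of_nonpos (by linarith)]; linarith
  · rw [abs_of_nonneg (by linarith)]; linarith

lemma gTri_compactSupport : HasCompactSupport gTri := by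
  apply HasCompactSupport.intro (isCompact_Icc (a := (-1:ℝ)) (b := 3))
  intro y hy
  simp only [Set.mem_Icc, not_and_or, not_le] at hy
  apply gTri_zero
  rcases hy with h | h
  · rw [abs_of_nonpos (by linarith)]; linarith
  · rw [abs_of_nonneg (by linarith)]; linarith

lemma fTri_unimodal : IsUnimodalDensity fTri 0 := by
  refine ⟨fTri_cont, fTri_nonneg, fTri_integral, ?_, ?_, ?_⟩
  · intro a ha b hb hab
    simp only [Set.mem_Iic] at ha hb
    exact max_le_max le_rfl (by rw [abs_of_nonpos ha, abs_of_nonpos hb]; linarith)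
  · intro a ha b hb hab
    simp only [Set.mem_Ici] at ha hb
    exact max_le_max le_rfl (by rw [abs_of_nonneg ha, abs_of_nonneg hb]; linarith)
  · intro x hx
    have h0 : fTri 0 = 1 := by simp [fTri]
    rw [h0]
    have := abs_pos.mpr hx
    exact max_lt one_pos (by linarith)

lemma gTri_unimodal : IsUnimodalDensity gTri 1 := by
  refine ⟨gTri_cont, gTri_nonneg, gTri_integral, ?_, ?_, ?_⟩
  · intro a ha b hb hab
    simp only [Set.mem_Iic] at ha hb
    apply mul_le_mul_of_nonneg_left _ (by norm_num)
    exact max_le_max le_rfl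
      (by rw [abs_of_nonpos (by linarith), abs_of_nonpos (by linarith)]; linarith)
  · intro a ha b hb hab
    simp only [Set.mem_Ici] at ha hb
    apply mul_le_mul_of_nonneg_left _ (by norm_num)
    exact max_le_max le_rfl
      (by rw [abs_of_nonneg (by linarith), abs_of_nonneg (by linarith)]; linarith)
  · intro x hx
    have h0 : gTri 1 = 1/2 := by norm_num [gTri]
    rw [h0]
    have hp : 0 < |x - 1| := abs_pos.mpr (sub_ne_zero.mpr hx)
    have : max 0 (1 - |x - 1| / 2) < 1 := max_lt one_pos (by linarith)
    unfold gTri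
    linarith

/-- The mixture `(fTri + gTri)/2` is strictly unimodal with mode `0`. -/
lemma mix_unimodal : IsUnimodalDensity (fun y => (fTri y + gTri y) / 2) 0 := by
  have hfInt : Integrable fTri := fTri_cont.integrable_of_hasCompactSupport fTri_compactSupport
  have hgInt : Integrable gTri := gTri_cont.integrable_of_hasCompactSupport gTri_compactSupport
  refine ⟨(fTri_cont.add gTri_cont).div_const 2, ?_, ?_, ?_, ?_, ?_⟩
  · intro y
    have := fTri_nonneg y; have := gTri_nonneg y
    positivity
  · rw [integral_div, integral_add hfInt hgInt, fTri_integral, gTri_integral]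
    norm_num
  · -- monotone on Iic 0
    intro a ha b hb hab
    simp only [Set.mem_Iic] at ha hb
    have h1 := fTri_unimodal.2.2.2.1 ha hb hab
    have h2 := gTri_unimodal.2.2.2.1 (Set.mem_Iic.mpr (by linarith : a ≤ (1:ℝ)))
      (Set.mem_Iic.mpr (by linarith : b ≤ (1:ℝ))) hab
    dsimp only
    linarith
  · -- antitone on Ici 0
    intro a ha b hb hab
    simp only [Set.mem_Ici] at ha hb
    dsimp only
    rcases le_total b 1 with hb1 | hb1
    · rw [fTri_eq (y := a) (abs_le.mpr ⟨by linarith, by linarith⟩),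
        fTri_eq (y := b) (abs_le.mpr ⟨by linarith, by linarith⟩),
        gTri_eq (y := a) (abs_le.mpr ⟨by linarith, by linarith⟩),
        gTri_eq (y := b) (abs_le.mpr ⟨by linarith, by linarith⟩),
        abs_of_nonneg ha, abs_of_nonneg hb,
        abs_of_nonpos (by linarith : a - 1 ≤ 0), abs_of_nonpos (by linarith : b - 1 ≤ 0)]
      linarith
    · rcases le_total a 1 with ha1 | ha1
      · rw [fTri_eq (y := a) (abs_le.mpr ⟨by linarith, by linarith⟩),
          fTri_zero (y := b) (by rw [abs_of_nonneg (by linarith)]; linarith),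
          gTri_eq (y := a) (abs_le.mpr ⟨by linarith, by linarith⟩),
          abs_of_nonneg ha, abs_of_nonpos (by linarith : a - 1 ≤ 0)]
        rcases le_total b 3 with hb3 | hb3
        · rw [gTri_eq (y := b) (abs_le.mpr ⟨by linarith, by linarith⟩),
            abs_of_nonneg (by linarith : (0:ℝ) ≤ b - 1)]
          linarith
        · rw [gTri_zero (y := b) (by rw [abs_of_nonneg (by linarith)]; linarith)]
          linarith
      · rw [fTri_zero (y := a) (by rw [abs_of_nonneg (by linarith)]; linarith),
          fTri_zero (y := b) (by rw [abs_of_nonneg (by linarith)]; linarith)]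
        rcases le_total b 3 with hb3 | hb3
        · rw [gTri_eq (y := a) (abs_le.mpr ⟨by linarith, by linarith⟩),
            gTri_eq (y := b) (abs_le.mpr ⟨by linarith, by linarith⟩),
            abs_of_nonneg (by linarith : (0:ℝ) ≤ a - 1),
            abs_of_nonneg (by linarith : (0:ℝ) ≤ b - 1)]
          linarith
        · rw [gTri_zero (y := b) (by rw [abs_of_nonneg (by linarith)]; linarith)]
          have := gTri_nonneg a
          linarith
  · -- strict maximum at 0
    intro x hx
    have h0 : (fTri 0 + gTri 0) / 2 = 5/8 := by norm_num [fTri, gTri]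
    dsimp only
    rw [h0]
    rcases lt_or_gt_of_ne hx with hneg | hpos
    · rcases le_total (-1) x with hm | hm
      · rw [fTri_eq (y := x) (abs_le.mpr ⟨hm, by linarith⟩),
          gTri_eq (y := x) (abs_le.mpr ⟨by linarith, by linarith⟩),
          abs_of_nonpos (by linarith : x ≤ 0), abs_of_nonpos (by linarith : x - 1 ≤ 0)]
        linarith
      · rw [fTri_zero (y := x) (by rw [abs_of_nonpos (by linarith)]; linarith),
          gTri_zero (y := x) (by rw [abs_of_nonpos (by linarith)]; linarith)]
        norm_num
    · rcases le_total x 1 with h1 | h1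
      · rw [fTri_eq (y := x) (abs_le.mpr ⟨by linarith, h1⟩),
          gTri_eq (y := x) (abs_le.mpr ⟨by linarith, by linarith⟩),
          abs_of_nonneg (by linarith : (0:ℝ) ≤ x), abs_of_nonpos (by linarith : x - 1 ≤ 0)]
        linarith
      · rw [fTri_zero (y := x) (by rw [abs_of_nonneg (by linarith)]; linarith)]
        rcases le_total x 3 with h3 | h3
        · rw [gTri_eq (y := x) (abs_le.mpr ⟨by linarith, by linarith⟩),
            abs_of_nonneg (by linarith : (0:ℝ) ≤ x - 1)]
          linarith
        · rw [gTri_zero (y := x) (by rw [abs_of_nonneg (by linarith)]; linarith)]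
          norm_num

/-- The mode is not identifiable relative to the class 𝓕₀ of strictly unimodal
distributions with continuous Lebesgue density. -/
theorem mode_not_identifiable_F0 :
    ¬ ∃ v : ℝ × ℝ → ℝ, StrictF0Identification v := by
  rintro ⟨v, hv_meas, hv_int, hv_id⟩
  -- integrability of v(0,·) against fTri and gTri
  have key : ∀ (p : ℝ → ℝ), MemF0 p → Continuous p → (∀ y, 0 ≤ p y) →
      Integrable (fun y => v (0, y) * p y) := by
    intro p hp hc hnn
    refine (hv_int 0 p hp).mono' ?_ (ae_of_all _ fun y => ?_)
    · exact ((hv_meas.comp measurable_prodMk_left).mul hc.measurable).aestronglyMeasurable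
    · rw [Real.norm_eq_abs, abs_mul, abs_of_nonneg (hnn y)]
  have hfmem : MemF0 fTri := ⟨0, fTri_unimodal⟩
  have hgmem : MemF0 gTri := ⟨1, gTri_unimodal⟩
  have hfI : Integrable (fun y => v (0, y) * fTri y) := key _ hfmem fTri_cont fTri_nonneg
  have hgI : Integrable (fun y => v (0, y) * gTri y) := key _ hgmem gTri_cont gTri_nonneg
  -- values of the identification integrals
  have hf0 : (∫ y : ℝ, v (0, y) * fTri y) = 0 := (hv_id fTri 0 fTri_unimodal 0).mpr rfl
  have hh0 : (∫ y : ℝ, v (0, y) * ((fTri y + gTri y) / 2)) = 0 :=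
    (hv_id _ 0 mix_unimodal 0).mpr rfl
  have hlin : (∫ y : ℝ, v (0, y) * ((fTri y + gTri y) / 2)) =
      ((∫ y : ℝ, v (0, y) * fTri y) + ∫ y : ℝ, v (0, y) * gTri y) / 2 := by
    have : (fun y => v (0, y) * ((fTri y + gTri y) / 2)) =
        fun y => (v (0, y) * fTri y + v (0, y) * gTri y) / 2 := by
      funext y; ring
    rw [this, integral_div, integral_add hfI hgI]
  have hg0 : (∫ y : ℝ, v (0, y) * gTri y) = 0 := by
    rw [hlin, hf0] at hh0
    linarith
  have : (0 : ℝ) = 1 := (hv_id gTri 1 gTri_unimodal 0).mp hg0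
  norm_num at this
end

section
/- Let s : ℝ × ℝ → ℝ be a strictly 𝓕₀-consistent scoring function for the mode, and let a < b be real numbers. Then for Lebesgue almost all pairs (x, y) ∈ ℝ × [a, b] (with respect to two-dimensional Lebesgue measure) it holds that s(x, y) = s(a, y)·𝟙{x < y} + s(b, y)·𝟙{x > y}. -/
set_option maxHeartbeats 1000000


open MeasureTheory Set Filter Real Topology

noncomputable def cauchyD (y : ℝ) : ℝ := (π * (1 + y ^ 2))⁻¹

lemma cauchyD_pos (y : ℝ) : 0 < cauchyD y := by
  unfold cauchyD; positivity

lemma cauchyD_unimodal : IsUnimodalDensity cauchyD 0 := by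
  refine ⟨by unfold cauchyD; fun_prop (disch := intro y; positivity), fun y => (cauchyD_pos y).le, ?_, ?_, ?_, ?_⟩
  · simp only [cauchyD, mul_inv]
    rw [integral_const_mul, integral_univ_inv_one_add_sq, inv_mul_cancel₀ pi_ne_zero]
  · intro u hu v hv huv
    simp only [mem_Iic] at hu hv
    unfold cauchyD
    apply inv_anti₀ (by positivity)
    have : v ^ 2 ≤ u ^ 2 := by nlinarith
    nlinarith [pi_pos]
  · intro u hu v hv huv
    simp only [mem_Ici] at hu hv
    unfold cauchyD
    apply inv_anti₀ (by positivity)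
    have : u ^ 2 ≤ v ^ 2 := by nlinarith
    nlinarith [pi_pos]
  · intro x hx
    unfold cauchyD
    apply inv_strictAnti₀ (by positivity)
    have : 0 < x ^ 2 := by positivity
    nlinarith [pi_pos]

lemma measurable_slice {s : ℝ × ℝ → ℝ} (hs : Measurable s) (x : ℝ) :
    Measurable (fun y => s (x, y)) :=
  hs.comp measurable_prodMk_left

lemma integrableOn_Icc_of_consistent {s : ℝ × ℝ → ℝ} (hs : StrictlyF0Consistent s)
    (x c d : ℝ) : IntegrableOn (fun y => s (x, y)) (Icc c d) := by
  set M : ℝ := max |c| |d| with hM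
  set m : ℝ := (π * (1 + M ^ 2))⁻¹ with hm
  have hmpos : 0 < m := by rw [hm]; positivity
  have hbound : ∀ y ∈ Icc c d, m ≤ cauchyD y := by
    intro y hy
    have h1 : y ≤ M := le_trans hy.2 (le_trans (le_abs_self d) (le_max_right _ _))
    have h2 : -M ≤ y := by
      have h3 : -c ≤ |c| := neg_le_abs c
      have h4 : |c| ≤ M := le_max_left _ _
      linarith [hy.1]
    have hy2 : y ^ 2 ≤ M ^ 2 := sq_le_sq' h2 h1
    unfold cauchyD
    rw [hm]
    apply inv_anti₀ (by positivity)
    nlinarith [pi_pos]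
  have hint : Integrable (fun y => |s (x, y)| * cauchyD y) :=
    hs.2.1 x cauchyD ⟨0, cauchyD_unimodal⟩
  have hint' : IntegrableOn (fun y => m⁻¹ * (|s (x, y)| * cauchyD y)) (Icc c d) :=
    ((hint.const_mul m⁻¹).integrableOn)
  apply hint'.mono' ((measurable_slice hs.1 x).aestronglyMeasurable)
  · filter_upwards [ae_restrict_mem measurableSet_Icc] with y hy
    have h1 := hbound y hy
    have h2 : 0 ≤ |s (x, y)| := abs_nonneg _
    rw [Real.norm_eq_abs]
    have key : m * |s (x, y)| ≤ |s (x, y)| * cauchyD y := by nlinarith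
    rw [← mul_le_mul_iff_right₀ hmpos]
    have : m * (m⁻¹ * (|s (x, y)| * cauchyD y)) = |s (x, y)| * cauchyD y := by
      field_simp
    rw [this]
    exact key

noncomputable def trap (y₁ y₂ ε y : ℝ) : ℝ :=
  max 0 (min 1 (min ((y - (y₁ - ε)) / ε) ((y₂ + ε - y) / ε)))
noncomputable def spike (t ε y : ℝ) : ℝ := max 0 (1 - |y - t| / ε)
noncomputable def bump (y₁ y₂ t ε y : ℝ) : ℝ := trap y₁ y₂ ε y + spike t ε y

section bumpfacts
variable {y₁ y₂ t ε : ℝ} (hε : 0 < ε) (hy : y₁ < y₂) (ht : t ∈ Icc y₁ y₂)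

lemma trap_nonneg (y : ℝ) : 0 ≤ trap y₁ y₂ ε y := le_max_left _ _
lemma spike_nonneg (y : ℝ) : 0 ≤ spike t ε y := le_max_left _ _
lemma trap_le_one (y : ℝ) : trap y₁ y₂ ε y ≤ 1 :=
  max_le zero_le_one (min_le_left _ _)
include hε in
lemma spike_le_one (y : ℝ) : spike t ε y ≤ 1 := by
  apply max_le zero_le_one
  have : 0 ≤ |y - t| / ε := div_nonneg (abs_nonneg _) hε.le
  linarith

lemma bump_nonneg (y : ℝ) : 0 ≤ bump y₁ y₂ t ε y :=
  add_nonneg (trap_nonneg y) (spike_nonneg y)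

lemma bump_le_two (hε : 0 < ε) (y : ℝ) : bump y₁ y₂ t ε y ≤ 2 := by
  have := trap_le_one (y₁ := y₁) (y₂ := y₂) (ε := ε) y
  have := spike_le_one hε (t := t) y
  unfold bump; linarith

include hε ht in
lemma trap_eq_one_on {y : ℝ} (h : y ∈ Icc y₁ y₂) : trap y₁ y₂ ε y = 1 := by
  unfold trap
  have h1 : (1 : ℝ) ≤ (y - (y₁ - ε)) / ε := by
    rw [le_div_iff₀ hε]; linarith [h.1]
  have h2 : (1 : ℝ) ≤ (y₂ + ε - y) / ε := by
    rw [le_div_iff₀ hε]; linarith [h.2]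
  rw [min_eq_left (le_min h1 h2), max_eq_right zero_le_one]

include hε in
lemma spike_self : spike t ε t = 1 := by
  unfold spike; simp [hε.le]

include hε in
lemma spike_lt_one {x : ℝ} (hx : x ≠ t) : spike t ε x < 1 := by
  unfold spike
  have h0 : 0 < |x - t| := abs_pos.mpr (sub_ne_zero.mpr hx)
  have : 0 < |x - t| / ε := by positivity
  apply max_lt one_pos; linarith

lemma continuous_trap : Continuous (trap y₁ y₂ ε) := by
  unfold trap; fun_prop

lemma continuous_spike : Continuous (spike t ε) := by
  unfold spike
  apply Continuous.max continuous_const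
  fun_prop

lemma continuous_bump : Continuous (bump y₁ y₂ t ε) :=
  (continuous_trap).add continuous_spike

include hε ht in
lemma monotoneOn_bump : MonotoneOn (bump y₁ y₂ t ε) (Iic t) := by
  intro u hu v hv huv
  simp only [mem_Iic] at hu hv
  unfold bump
  have htrap : trap y₁ y₂ ε u ≤ trap y₁ y₂ ε v := by
    unfold trap
    apply max_le_max le_rfl
    refine le_min (min_le_left _ _) (le_min ?_ ?_)
    · refine le_trans (min_le_right _ _) (le_trans (min_le_left _ _) ?_)
      exact div_le_div_of_nonneg_right (by linarith) hε.le
    · refine le_trans (min_le_left _ _) ?_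
      rw [le_div_iff₀ hε]; have := ht.2; linarith
  have hspike : spike t ε u ≤ spike t ε v := by
    unfold spike
    apply max_le_max le_rfl
    have h1 : |v - t| ≤ |u - t| := by
      rw [abs_sub_comm v t, abs_sub_comm u t, abs_of_nonneg (by linarith), abs_of_nonneg (by linarith)]
      linarith
    have : |v - t| / ε ≤ |u - t| / ε := div_le_div_of_nonneg_right h1 hε.le
    linarith
  linarith

include hε ht in
lemma antitoneOn_bump : AntitoneOn (bump y₁ y₂ t ε) (Ici t) := by
  intro u hu v hv huv
  simp only [mem_Ici] at hu hv
  unfold bump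
  have htrap : trap y₁ y₂ ε v ≤ trap y₁ y₂ ε u := by
    unfold trap
    apply max_le_max le_rfl
    refine le_min (min_le_left _ _) (le_min ?_ ?_)
    · refine le_trans (min_le_left _ _) ?_
      rw [le_div_iff₀ hε]; have := ht.1; linarith
    · refine le_trans (min_le_right _ _) (le_trans (min_le_right _ _) ?_)
      exact div_le_div_of_nonneg_right (by linarith) hε.le
  have hspike : spike t ε v ≤ spike t ε u := by
    unfold spike
    apply max_le_max le_rfl
    have h1 : |u - t| ≤ |v - t| := by
      rw [abs_of_nonneg (by linarith), abs_of_nonneg (by linarith)]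
      linarith
    have : |u - t| / ε ≤ |v - t| / ε := div_le_div_of_nonneg_right h1 hε.le
    linarith
  linarith

include hε ht in
lemma bump_lt_at_max {x : ℝ} (hx : x ≠ t) : bump y₁ y₂ t ε x < bump y₁ y₂ t ε t := by
  unfold bump
  rw [trap_eq_one_on hε ht ht, spike_self hε]
  have := trap_le_one (y₁ := y₁) (y₂ := y₂) (ε := ε) x
  have := spike_lt_one hε (t := t) hx
  linarith

include hε ht in
lemma bump_support {y : ℝ} (h : y ∉ Icc (y₁ - ε) (y₂ + ε)) : bump y₁ y₂ t ε y = 0 := by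
  simp only [mem_Icc, not_and_or, not_le] at h
  have hts : spike t ε y = 0 := by
    unfold spike
    apply max_eq_left
    have : ε < |y - t| := by
      rcases h with h | h
      · rw [abs_sub_comm, abs_of_nonneg (by linarith [ht.1])]; linarith [ht.1]
      · rw [abs_of_nonneg (by linarith [ht.2])]; linarith [ht.2]
    rw [sub_nonpos, le_div_iff₀ hε, one_mul]
    exact this.le
  have htr : trap y₁ y₂ ε y = 0 := by
    unfold trap
    apply max_eq_left
    rcases h with h | h
    · refine le_trans (min_le_right _ _) (le_trans (min_le_left _ _) ?_)
      rw [div_nonpos_iff]; right; constructor <;> linarith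
    · refine le_trans (min_le_right _ _) (le_trans (min_le_right _ _) ?_)
      rw [div_nonpos_iff]; right; constructor <;> linarith
  unfold bump; rw [hts, htr, add_zero]

include hε ht in
lemma bump_ge_indicator (y : ℝ) :
    (Icc y₁ y₂).indicator (fun _ => (1 : ℝ)) y ≤ bump y₁ y₂ t ε y := by
  by_cases h : y ∈ Icc y₁ y₂
  · rw [indicator_of_mem h]
    unfold bump
    rw [trap_eq_one_on hε ht h]
    linarith [spike_nonneg (t := t) (ε := ε) y]
  · rw [indicator_of_notMem h]
    exact bump_nonneg y

include hε ht in
lemma bump_integrable : Integrable (bump y₁ y₂ t ε) := by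
  apply Continuous.integrable_of_hasCompactSupport continuous_bump
  apply HasCompactSupport.of_support_subset_isCompact (isCompact_Icc (a := y₁ - ε) (b := y₂ + ε))
  intro y hy
  simp only [Function.mem_support] at hy
  by_contra h
  exact hy (bump_support hε ht h)

include hε hy ht in
lemma bump_integral_pos : y₂ - y₁ ≤ ∫ y, bump y₁ y₂ t ε y := by
  have h1 : ∫ y, (Icc y₁ y₂).indicator (fun _ => (1 : ℝ)) y = y₂ - y₁ := by
    rw [integral_indicator measurableSet_Icc]
    simp [hy.le]
  rw [← h1]
  apply integral_mono _ (bump_integrable hε ht) (bump_ge_indicator hε ht)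
  · rw [integrable_indicator_iff measurableSet_Icc]
    exact integrableOn_const (by simp)

include hε in
lemma spike_eq_zero {y : ℝ} (h : ε ≤ |y - t|) : spike t ε y = 0 := by
  unfold spike
  apply max_eq_left
  rw [sub_nonpos, le_div_iff₀ hε, one_mul]
  exact h

end bumpfacts

noncomputable def bumpI (y₁ y₂ t ε : ℝ) : ℝ := ∫ y, bump y₁ y₂ t ε y

section DD
variable {y₁ y₂ t ε : ℝ} (hε : 0 < ε) (hy : y₁ < y₂) (ht : t ∈ Icc y₁ y₂)


include hε hy ht in
lemma bumpI_pos : 0 < bumpI y₁ y₂ t ε :=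
  lt_of_lt_of_le (by linarith) (bump_integral_pos hε hy ht)

include hε hy ht in
lemma bump_unimodal :
    IsUnimodalDensity (fun y => bump y₁ y₂ t ε y / bumpI y₁ y₂ t ε) t := by
  have hpos := bumpI_pos hε hy ht
  refine ⟨(continuous_bump).div_const _,
    fun y => div_nonneg (bump_nonneg y) hpos.le, ?_, ?_, ?_, ?_⟩
  · rw [integral_div]; exact div_self hpos.ne'
  · intro u hu v hv huv
    exact div_le_div_of_nonneg_right (monotoneOn_bump hε ht hu hv huv) hpos.le
  · intro u hu v hv huv
    exact div_le_div_of_nonneg_right (antitoneOn_bump hε ht hu hv huv) hpos.le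
  · intro x hx
    exact div_lt_div_of_pos_right (bump_lt_at_max hε ht hx) hpos

/-- the sequence of widths -/
noncomputable def εseq (n : ℕ) : ℝ := ((n : ℝ) + 1)⁻¹
lemma εseq_pos (n : ℕ) : 0 < εseq n := by unfold εseq; positivity
lemma εseq_le_one (n : ℕ) : εseq n ≤ 1 := by
  unfold εseq
  rw [inv_le_one_iff₀]
  right
  linarith [Nat.cast_nonneg (α := ℝ) n]

lemma εseq_eventually_le {δ : ℝ} (hδ : 0 < δ) : ∀ᶠ n in atTop, εseq n ≤ δ := by
  filter_upwards [eventually_ge_atTop ⌈1/δ⌉₊] with n hn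
  unfold εseq
  have h1 : (1:ℝ)/δ ≤ ⌈1/δ⌉₊ := Nat.le_ceil _
  have h2 : (⌈1/δ⌉₊ : ℝ) ≤ n := Nat.cast_le.mpr hn
  have h3 : 1/δ ≤ (n:ℝ) + 1 := by linarith
  calc ((n:ℝ) + 1)⁻¹ ≤ (1/δ)⁻¹ := by
        apply inv_anti₀ (by positivity) h3
    _ = δ := by rw [one_div, inv_inv]

include hy ht in
lemma tendsto_bump_integral {u : ℝ → ℝ} (hmeas : Measurable u)
    (hint : IntegrableOn u (Icc (y₁ - 1) (y₂ + 1))) :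
    Tendsto (fun n : ℕ => ∫ y, u y * bump y₁ y₂ t (εseq n) y) atTop
      (𝓝 (∫ y in Icc y₁ y₂, u y)) := by
  have key : ∫ y in Icc y₁ y₂, u y = ∫ y, (Icc y₁ y₂).indicator u y := by
    rw [integral_indicator measurableSet_Icc]
  rw [key]
  apply tendsto_integral_of_dominated_convergence
    (bound := (Icc (y₁ - 1) (y₂ + 1)).indicator (fun y => 2 * |u y|))
  · intro n
    exact (hmeas.mul ((continuous_bump).measurable)).aestronglyMeasurable
  · rw [integrable_indicator_iff measurableSet_Icc]
    exact (hint.norm.const_mul 2).congr (by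
      filter_upwards with y
      simp [abs_of_nonneg (abs_nonneg (u y)), Real.norm_eq_abs])
  · intro n
    filter_upwards with y
    by_cases h : y ∈ Icc (y₁ - 1) (y₂ + 1)
    · rw [indicator_of_mem h, Real.norm_eq_abs, abs_mul,
        abs_of_nonneg (bump_nonneg y)]
      have h2 := bump_le_two (y₁ := y₁) (y₂ := y₂) (t := t) (εseq_pos n) y
      have h0 := bump_nonneg (y₁ := y₁) (y₂ := y₂) (t := t) (ε := εseq n) y
      have := abs_nonneg (u y)
      nlinarith
    · rw [indicator_of_notMem h]
      have hb : bump y₁ y₂ t (εseq n) y = 0 := by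
        apply bump_support (εseq_pos n) ht
        simp only [mem_Icc, not_and_or, not_le] at h ⊢
        have := εseq_le_one n
        rcases h with h | h
        · left; linarith
        · right; linarith
      rw [hb, mul_zero, norm_zero]
  · have hnull : (volume : Measure ℝ) {y₁, y₂, t} = 0 :=
      Set.Countable.measure_zero (Set.toFinite _).countable _
    filter_upwards [measure_eq_zero_iff_ae_notMem.mp hnull] with y hy'
    simp only [mem_insert_iff, mem_singleton_iff, not_or] at hy'
    obtain ⟨hny₁, hny₂, hnt⟩ := hy'
    by_cases hmem : y ∈ Icc y₁ y₂
    · rw [indicator_of_mem hmem]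
      apply Tendsto.congr' _ tendsto_const_nhds
      have hdist : 0 < |y - t| := abs_pos.mpr (sub_ne_zero.mpr hnt)
      filter_upwards [εseq_eventually_le hdist] with n hn
      have : bump y₁ y₂ t (εseq n) y = 1 := by
        unfold bump
        rw [trap_eq_one_on (εseq_pos n) ht hmem, spike_eq_zero (εseq_pos n) hn, add_zero]
      rw [this, mul_one]
    · rw [indicator_of_notMem hmem]
      apply Tendsto.congr' _ tendsto_const_nhds
      simp only [mem_Icc, not_and_or, not_le] at hmem
      set δ : ℝ := (if y < y₁ then y₁ - y else y - y₂) / 2 with hδdef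
      have hdist : 0 < δ := by
        rcases hmem with h | h
        · have hc : y < y₁ := h
          rw [hδdef, if_pos hc]; linarith
        · rcases lt_or_ge y y₁ with hc | hc
          · rw [hδdef, if_pos hc]; linarith
          · rw [hδdef, if_neg (not_lt.mpr hc)]; linarith
      filter_upwards [εseq_eventually_le hdist] with n hn
      have : bump y₁ y₂ t (εseq n) y = 0 := by
        apply bump_support (εseq_pos n) ht
        simp only [mem_Icc, not_and_or, not_le]
        rcases lt_or_ge y y₁ with hc | hc
        · rw [hδdef, if_pos hc] at hn; left; linarith
        · rw [hδdef, if_neg (not_lt.mpr hc)] at hn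
          right
          rcases hmem with h | h
          · exact absurd h (not_lt.mpr hc)
          · linarith
      rw [this, mul_zero]

end DD

lemma lint_ne_top {μ : Measure ℝ} {h : ℝ → ℝ} (hI : Integrable h μ) :
    (∫⁻ y, ENNReal.ofReal (h y) ∂μ) ≠ ⊤ := by
  apply ne_of_lt
  apply lt_of_le_of_lt _ hI.2
  apply lintegral_mono
  intro y
  simp only [← ofReal_norm]
  exact ENNReal.ofReal_le_ofReal (le_abs_self _)

lemma setint_eq_sub {μ : Measure ℝ} {h : ℝ → ℝ} (hI : Integrable h μ)
    {A : Set ℝ} (hA : MeasurableSet A) :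
    (∫ y in A, h y ∂μ) =
      (∫⁻ y in A, ENNReal.ofReal (h y) ∂μ).toReal
      - (∫⁻ y in A, ENNReal.ofReal (-h y) ∂μ).toReal := by
  exact integral_eq_lintegral_pos_part_sub_lintegral_neg_part (hI.restrict)

lemma ae_zero_of_Ioc_zero {h : ℝ → ℝ} (hmeas : Measurable h)
    (hint : ∀ c d : ℝ, IntegrableOn h (Ioc c d))
    {m : ℝ} (h0 : ∀ c d : ℝ, m ≤ c → c < d → (∫ y in Ioc c d, h y) = 0) :
    ∀ᵐ y, y ∈ Ioi m → h y = 0 := by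
  have main : ∀ k : ℕ, ∀ᵐ y, y ∈ Ioc m (m + k + 1) → h y = 0 := by
    intro k
    set M : ℝ := m + k + 1 with hM
    set μ : Measure ℝ := volume.restrict (Ioc m M) with hμ
    haveI : IsFiniteMeasure μ := by
      constructor
      rw [hμ, Measure.restrict_apply_univ]
      exact measure_Ioc_lt_top
    have hI : Integrable h μ := hint m M
    -- the two densities
    set ν₁ : Measure ℝ := μ.withDensity (fun y => ENNReal.ofReal (h y)) with hν₁
    set ν₂ : Measure ℝ := μ.withDensity (fun y => ENNReal.ofReal (-h y)) with hν₂
    have hm₁ : Measurable (fun y => ENNReal.ofReal (h y)) := hmeas.ennreal_ofReal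
    have hm₂ : Measurable (fun y => ENNReal.ofReal (-h y)) := hmeas.neg.ennreal_ofReal
    have hfin₁ : ∀ A : Set ℝ, MeasurableSet A → (∫⁻ y in A, ENNReal.ofReal (h y) ∂μ) ≠ ⊤ := by
      intro A hA
      apply ne_top_of_le_ne_top (lint_ne_top hI)
      exact setLIntegral_le_lintegral _ _
    have hfin₂ : ∀ A : Set ℝ, MeasurableSet A → (∫⁻ y in A, ENNReal.ofReal (-h y) ∂μ) ≠ ⊤ := by
      intro A hA
      apply ne_top_of_le_ne_top (lint_ne_top hI.neg)
      exact setLIntegral_le_lintegral _ _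
    -- equality on Ioc intervals
    have hIoc : ∀ c d : ℝ, c < d → ν₁ (Ioc c d) = ν₂ (Ioc c d) := by
      intro c d hcd
      rw [hν₁, hν₂, withDensity_apply _ measurableSet_Ioc,
        withDensity_apply _ measurableSet_Ioc]
      have hres : μ.restrict (Ioc c d) = volume.restrict (Ioc (max c m) (min d M)) := by
        rw [hμ, Measure.restrict_restrict measurableSet_Ioc, Ioc_inter_Ioc]
      rw [hres]
      rcases lt_or_ge (max c m) (min d M) with hlt | hle
      · have hzero : (∫ y in Ioc (max c m) (min d M), h y) = 0 :=
          h0 _ _ (le_max_right c m) hlt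
        have hIcd : Integrable h (volume.restrict (Ioc (max c m) (min d M))) := hint _ _
        have hsub := integral_eq_lintegral_pos_part_sub_lintegral_neg_part hIcd
        rw [hzero] at hsub
        have f1 : (∫⁻ y in Ioc (max c m) (min d M), ENNReal.ofReal (h y)) ≠ ⊤ :=
          lint_ne_top hIcd
        have f2 : (∫⁻ y in Ioc (max c m) (min d M), ENNReal.ofReal (-h y)) ≠ ⊤ :=
          lint_ne_top hIcd.neg
        have := sub_eq_zero.mp hsub.symm
        exact (ENNReal.toReal_eq_toReal_iff' f1 f2).mp this
      · rw [Ioc_eq_empty (not_lt.mpr hle), Measure.restrict_empty]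
        simp
    -- extension to all measurable sets
    have hext : ν₁ = ν₂ := by
      apply MeasureTheory.Measure.ext_of_Ioc' ν₁ ν₂
      · intro c d hcd
        rw [hν₁, withDensity_apply _ measurableSet_Ioc]
        exact hfin₁ _ measurableSet_Ioc
      · exact fun c d hcd => hIoc c d hcd
    have hall : ∀ A : Set ℝ, MeasurableSet A → (∫ y in A, h y ∂μ) = 0 := by
      intro A hA
      have : ν₁ A = ν₂ A := by rw [hext]
      rw [hν₁, hν₂, withDensity_apply _ hA, withDensity_apply _ hA] at this
      rw [setint_eq_sub hI hA, this, sub_self]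
    have hae : h =ᵐ[μ] 0 :=
      ae_eq_zero_of_forall_setIntegral_eq_of_sigmaFinite
        (fun A hA _ => hI.integrableOn) (fun A hA _ => hall A hA)
    rw [hμ] at hae
    exact (ae_restrict_iff' measurableSet_Ioc).mp hae
  rw [← ae_all_iff] at main
  filter_upwards [main] with y hy hyIoi
  have hym : m < y := hyIoi
  set k : ℕ := ⌈y - m⌉₊ with hk
  apply hy k
  constructor
  · exact hym
  · have h1 : y - m ≤ (k:ℝ) := Nat.le_ceil _
    linarith

lemma ae_zero_of_Ioc_zero' {h : ℝ → ℝ} (hmeas : Measurable h)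
    (hint : ∀ c d : ℝ, IntegrableOn h (Ioc c d))
    {m : ℝ} (h0 : ∀ c d : ℝ, c < d → d ≤ m → (∫ y in Ioc c d, h y) = 0) :
    ∀ᵐ y, y ∈ Iio m → h y = 0 := by
  have main : ∀ k : ℕ, ∀ᵐ y, y ∈ Ioc (m - k - 1) m → h y = 0 := by
    intro k
    set M : ℝ := m - k - 1 with hM
    set μ : Measure ℝ := volume.restrict (Ioc M m) with hμ
    haveI : IsFiniteMeasure μ := by
      constructor
      rw [hμ, Measure.restrict_apply_univ]
      exact measure_Ioc_lt_top
    have hI : Integrable h μ := hint M m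
    set ν₁ : Measure ℝ := μ.withDensity (fun y => ENNReal.ofReal (h y)) with hν₁
    set ν₂ : Measure ℝ := μ.withDensity (fun y => ENNReal.ofReal (-h y)) with hν₂
    have hIoc : ∀ c d : ℝ, c < d → ν₁ (Ioc c d) = ν₂ (Ioc c d) := by
      intro c d hcd
      rw [hν₁, hν₂, withDensity_apply _ measurableSet_Ioc,
        withDensity_apply _ measurableSet_Ioc]
      have hres : μ.restrict (Ioc c d) = volume.restrict (Ioc (max c M) (min d m)) := by
        rw [hμ, Measure.restrict_restrict measurableSet_Ioc, Ioc_inter_Ioc]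
      rw [hres]
      rcases lt_or_ge (max c M) (min d m) with hlt | hle
      · have hzero : (∫ y in Ioc (max c M) (min d m), h y) = 0 :=
          h0 _ _ hlt (min_le_right d m)
        have hIcd : Integrable h (volume.restrict (Ioc (max c M) (min d m))) := hint _ _
        have hsub := integral_eq_lintegral_pos_part_sub_lintegral_neg_part hIcd
        rw [hzero] at hsub
        have f1 : (∫⁻ y in Ioc (max c M) (min d m), ENNReal.ofReal (h y)) ≠ ⊤ :=
          lint_ne_top hIcd
        have f2 : (∫⁻ y in Ioc (max c M) (min d m), ENNReal.ofReal (-h y)) ≠ ⊤ :=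
          lint_ne_top hIcd.neg
        have := sub_eq_zero.mp hsub.symm
        exact (ENNReal.toReal_eq_toReal_iff' f1 f2).mp this
      · rw [Ioc_eq_empty (not_lt.mpr hle), Measure.restrict_empty]
        simp
    have hext : ν₁ = ν₂ := by
      apply MeasureTheory.Measure.ext_of_Ioc' ν₁ ν₂
      · intro c d hcd
        rw [hν₁, withDensity_apply _ measurableSet_Ioc]
        apply ne_top_of_le_ne_top (lint_ne_top hI)
        exact setLIntegral_le_lintegral _ _
      · exact fun c d hcd => hIoc c d hcd
    have hall : ∀ A : Set ℝ, MeasurableSet A → (∫ y in A, h y ∂μ) = 0 := by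
      intro A hA
      have : ν₁ A = ν₂ A := by rw [hext]
      rw [hν₁, hν₂, withDensity_apply _ hA, withDensity_apply _ hA] at this
      rw [setint_eq_sub hI hA, this, sub_self]
    have hae : h =ᵐ[μ] 0 :=
      ae_eq_zero_of_forall_setIntegral_eq_of_sigmaFinite
        (fun A hA _ => hI.integrableOn) (fun A hA _ => hall A hA)
    rw [hμ] at hae
    exact (ae_restrict_iff' measurableSet_Ioc).mp hae
  rw [← ae_all_iff] at main
  filter_upwards [main] with y hy hyIio
  have hym : y < m := hyIio
  set k : ℕ := ⌈m - y⌉₊ with hk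
  apply hy k
  constructor
  · have h1 : m - y ≤ (k:ℝ) := Nat.le_ceil _
    linarith
  · linarith

section A
variable {s : ℝ × ℝ → ℝ}

lemma lemmaA_le (hs : StrictlyF0Consistent s) {y₁ y₂ t₁ t₂ : ℝ} (hy : y₁ < y₂)
    (ht₁ : t₁ ∈ Icc y₁ y₂) (ht₂ : t₂ ∈ Icc y₁ y₂) :
    (∫ y in Icc y₁ y₂, s (t₁, y)) ≤ ∫ y in Icc y₁ y₂, s (t₂, y) := by
  have hL : (0:ℝ) < y₂ - y₁ := by linarith
  have hm : Tendsto (fun n => bumpI y₁ y₂ t₁ (εseq n)) atTop (𝓝 (y₂ - y₁)) := by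
    have h := tendsto_bump_integral hy ht₁ (u := fun _ => (1:ℝ)) measurable_const
      (integrableOn_const measure_Icc_lt_top.ne)
    have h2 : (∫ y in Icc y₁ y₂, (1:ℝ)) = y₂ - y₁ := by
      simp [Real.volume_Icc, hy.le]
    rw [h2] at h
    apply h.congr
    intro n
    simp [bumpI]
  have hA : ∀ x : ℝ, Tendsto (fun n => ∫ y, s (x, y) * bump y₁ y₂ t₁ (εseq n) y) atTop
      (𝓝 (∫ y in Icc y₁ y₂, s (x, y))) := fun x =>
    tendsto_bump_integral hy ht₁ (measurable_slice hs.1 x)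
      (integrableOn_Icc_of_consistent hs x _ _)
  have hcons : ∀ n : ℕ,
      (∫ y, s (t₁, y) * bump y₁ y₂ t₁ (εseq n) y) / bumpI y₁ y₂ t₁ (εseq n) ≤
      (∫ y, s (t₂, y) * bump y₁ y₂ t₁ (εseq n) y) / bumpI y₁ y₂ t₁ (εseq n) := by
    intro n
    have h := (hs.2.2 _ t₁ (bump_unimodal (εseq_pos n) hy ht₁) t₂).1
    have rw1 : ∀ x : ℝ, (∫ y, s (x, y) * (bump y₁ y₂ t₁ (εseq n) y / bumpI y₁ y₂ t₁ (εseq n)))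
        = (∫ y, s (x, y) * bump y₁ y₂ t₁ (εseq n) y) / bumpI y₁ y₂ t₁ (εseq n) := by
      intro x
      rw [← integral_div]
      congr 1
      funext y
      rw [mul_div_assoc]
    rw [rw1 t₁, rw1 t₂] at h
    exact h
  have T1 := (hA t₁).div hm hL.ne'
  have T2 := (hA t₂).div hm hL.ne'
  have hle := le_of_tendsto_of_tendsto' T1 T2 hcons
  calc (∫ y in Icc y₁ y₂, s (t₁, y))
      = ((∫ y in Icc y₁ y₂, s (t₁, y)) / (y₂ - y₁)) * (y₂ - y₁) := by field_simp
    _ ≤ ((∫ y in Icc y₁ y₂, s (t₂, y)) / (y₂ - y₁)) * (y₂ - y₁) := by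
        apply mul_le_mul_of_nonneg_right hle hL.le
    _ = ∫ y in Icc y₁ y₂, s (t₂, y) := by field_simp

lemma lemmaA_eq (hs : StrictlyF0Consistent s) {y₁ y₂ t₁ t₂ : ℝ} (hy : y₁ < y₂)
    (ht₁ : t₁ ∈ Icc y₁ y₂) (ht₂ : t₂ ∈ Icc y₁ y₂) :
    (∫ y in Icc y₁ y₂, s (t₁, y)) = ∫ y in Icc y₁ y₂, s (t₂, y) :=
  le_antisymm (lemmaA_le hs hy ht₁ ht₂) (lemmaA_le hs hy ht₂ ht₁)

lemma lemmaA_eq_Ioc (hs : StrictlyF0Consistent s) {y₁ y₂ t₁ t₂ : ℝ} (hy : y₁ < y₂)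
    (ht₁ : t₁ ∈ Icc y₁ y₂) (ht₂ : t₂ ∈ Icc y₁ y₂) :
    (∫ y in Ioc y₁ y₂, s (t₁, y)) = ∫ y in Ioc y₁ y₂, s (t₂, y) := by
  rw [← integral_Icc_eq_integral_Ioc, ← integral_Icc_eq_integral_Ioc]
  exact lemmaA_eq hs hy ht₁ ht₂

lemma integrableOn_Ioc_s (hs : StrictlyF0Consistent s) (x c d : ℝ) :
    IntegrableOn (fun y => s (x, y)) (Ioc c d) :=
  (integrableOn_Icc_of_consistent hs x c d).mono_set Ioc_subset_Icc_self

/-- additivity -/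
lemma Ioc_split (hs : StrictlyF0Consistent s) (x : ℝ) {c e d : ℝ} (h1 : c ≤ e) (h2 : e ≤ d) :
    (∫ y in Ioc c d, s (x, y)) = (∫ y in Ioc c e, s (x, y)) + ∫ y in Ioc e d, s (x, y) := by
  rw [← Ioc_union_Ioc_eq_Ioc h1 h2, setIntegral_union (Ioc_disjoint_Ioc_of_le le_rfl)
    measurableSet_Ioc (integrableOn_Ioc_s hs x c e) (integrableOn_Ioc_s hs x e d)]

lemma lemmaB_left (hs : StrictlyF0Consistent s) {x₁ x₂ c d : ℝ}
    (h1 : x₁ ≤ c) (h2 : x₂ ≤ c) (hcd : c < d) :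
    (∫ y in Ioc c d, s (x₁, y)) = ∫ y in Ioc c d, s (x₂, y) := by
  set e : ℝ := min x₁ x₂ - 1 with he
  have he1 : e < c := by
    have hx := min_le_left x₁ x₂
    linarith
  have hx₁ : x₁ ∈ Icc e d := ⟨by have := min_le_left x₁ x₂; linarith, by linarith⟩
  have hx₂ : x₂ ∈ Icc e d := ⟨by have := min_le_right x₁ x₂; linarith, by linarith⟩
  have hx₁' : x₁ ∈ Icc e c := ⟨hx₁.1, h1⟩
  have hx₂' : x₂ ∈ Icc e c := ⟨hx₂.1, h2⟩
  have hbig := lemmaA_eq_Ioc hs (show e < d by linarith) hx₁ hx₂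
  have hsmall := lemmaA_eq_Ioc hs he1 hx₁' hx₂'
  have hs₁ := Ioc_split hs x₁ he1.le hcd.le
  have hs₂ := Ioc_split hs x₂ he1.le hcd.le
  linarith

lemma lemmaB_right (hs : StrictlyF0Consistent s) {x₁ x₂ c d : ℝ}
    (h1 : d ≤ x₁) (h2 : d ≤ x₂) (hcd : c < d) :
    (∫ y in Ioc c d, s (x₁, y)) = ∫ y in Ioc c d, s (x₂, y) := by
  set e : ℝ := max x₁ x₂ + 1 with he
  have he1 : d < e := by
    have := le_max_left x₁ x₂
    linarith
  have hx₁ : x₁ ∈ Icc c e := ⟨by linarith, by have := le_max_left x₁ x₂; linarith⟩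
  have hx₂ : x₂ ∈ Icc c e := ⟨by linarith, by have := le_max_right x₁ x₂; linarith⟩
  have hx₁' : x₁ ∈ Icc d e := ⟨h1, hx₁.2⟩
  have hx₂' : x₂ ∈ Icc d e := ⟨h2, hx₂.2⟩
  have hbig := lemmaA_eq_Ioc hs (show c < e by linarith) hx₁ hx₂
  have hsmall := lemmaA_eq_Ioc hs he1 hx₁' hx₂'
  have hs₁ := Ioc_split hs x₁ hcd.le he1.le
  have hs₂ := Ioc_split hs x₂ hcd.le he1.le
  linarith

end A

section final
variable {s : ℝ × ℝ → ℝ}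

lemma slice_left (hs : StrictlyF0Consistent s) (a x : ℝ) :
    ∀ᵐ y, y ∈ Ioi (max x a) → s (x, y) = s (a, y) := by
  have h := ae_zero_of_Ioc_zero (h := fun y => s (x, y) - s (a, y))
    ((measurable_slice hs.1 x).sub (measurable_slice hs.1 a))
    (fun c d => (integrableOn_Ioc_s hs x c d).sub (integrableOn_Ioc_s hs a c d))
    (m := max x a) ?_
  · filter_upwards [h] with y hy hmem
    have := hy hmem
    linarith
  · intro c d hc hcd
    rw [integral_sub (integrableOn_Ioc_s hs x c d) (integrableOn_Ioc_s hs a c d)]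
    rw [lemmaB_left hs (le_trans (le_max_left x a) hc) (le_trans (le_max_right x a) hc) hcd]
    ring

lemma slice_right (hs : StrictlyF0Consistent s) (b x : ℝ) :
    ∀ᵐ y, y ∈ Iio (min x b) → s (x, y) = s (b, y) := by
  have h := ae_zero_of_Ioc_zero' (h := fun y => s (x, y) - s (b, y))
    ((measurable_slice hs.1 x).sub (measurable_slice hs.1 b))
    (fun c d => (integrableOn_Ioc_s hs x c d).sub (integrableOn_Ioc_s hs b c d))
    (m := min x b) ?_
  · filter_upwards [h] with y hy hmem
    have := hy hmem
    linarith
  · intro c d hcd hd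
    rw [integral_sub (integrableOn_Ioc_s hs x c d) (integrableOn_Ioc_s hs b c d)]
    rw [lemmaB_right hs (le_trans hd (min_le_left x b)) (le_trans hd (min_le_right x b)) hcd]
    ring

theorem score_ae_piecewise_aux (hs : StrictlyF0Consistent s)
    (a b : ℝ) (hab : a < b) :
    ∀ᵐ p : ℝ × ℝ, p.2 ∈ Set.Icc a b →
      s p = s (a, p.2) * (if p.1 < p.2 then 1 else 0)
          + s (b, p.2) * (if p.2 < p.1 then 1 else 0) := by
  rw [ae_iff]
  set B : Set (ℝ × ℝ) := {p : ℝ × ℝ | ¬(p.2 ∈ Set.Icc a b →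
      s p = s (a, p.2) * (if p.1 < p.2 then 1 else 0)
          + s (b, p.2) * (if p.2 < p.1 then 1 else 0))} with hB
  have hBmeas : MeasurableSet B := by
    rw [hB]
    simp only [_root_.not_imp]
    apply MeasurableSet.inter
    · exact measurable_snd measurableSet_Icc
    · apply MeasurableSet.compl
      apply measurableSet_eq_fun hs.1
      apply Measurable.add
      · apply Measurable.mul
        · exact hs.1.comp (measurable_const.prodMk measurable_snd)
        · exact Measurable.ite (measurableSet_lt measurable_fst measurable_snd)
            measurable_const measurable_const
      · apply Measurable.mul
        · exact hs.1.comp (measurable_const.prodMk measurable_snd)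
        · exact Measurable.ite (measurableSet_lt measurable_snd measurable_fst)
            measurable_const measurable_const
  rw [show (volume : Measure (ℝ × ℝ)) = (volume : Measure ℝ).prod volume from
    Measure.volume_eq_prod ℝ ℝ]
  rw [Measure.measure_prod_null hBmeas]
  filter_upwards with x
  simp only [Pi.zero_apply]
  rw [measure_eq_zero_iff_ae_notMem]
  have hxa : ∀ᵐ y : ℝ, y ≠ x := by
    have : (volume : Measure ℝ) {x} = 0 := measure_singleton x
    filter_upwards [measure_eq_zero_iff_ae_notMem.mp this] with y hy
    simpa using hy
  have hya : ∀ᵐ y : ℝ, y ≠ a := by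
    have : (volume : Measure ℝ) {a} = 0 := measure_singleton a
    filter_upwards [measure_eq_zero_iff_ae_notMem.mp this] with y hy
    simpa using hy
  have hyb : ∀ᵐ y : ℝ, y ≠ b := by
    have : (volume : Measure ℝ) {b} = 0 := measure_singleton b
    filter_upwards [measure_eq_zero_iff_ae_notMem.mp this] with y hy
    simpa using hy
  filter_upwards [slice_left hs a x, slice_right hs b x, hxa, hya, hyb]
    with y hleft hright hne hnea hneb
  simp only [mem_preimage, hB, mem_setOf_eq, not_not]
  intro hmy
  obtain ⟨hy1, hy2⟩ := hmy
  rcases lt_trichotomy x y with hlt | heq | hgt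
  · rw [if_pos hlt, if_neg (by linarith), mul_one, mul_zero, add_zero]
    apply hleft
    rw [mem_Ioi, max_lt_iff]
    exact ⟨hlt, lt_of_le_of_ne hy1 (Ne.symm hnea)⟩
  · exact absurd heq.symm hne
  · rw [if_neg (by linarith), if_pos hgt, mul_zero, zero_add, mul_one]
    apply hright
    rw [mem_Iio, lt_min_iff]
    exact ⟨hgt, lt_of_le_of_ne hy2 hneb⟩

end final

/-- Lemma 2: if `s` is strictly 𝓕₀-consistent for the mode and `a < b`, then for
Lebesgue almost all pairs `(x, y)` with `y ∈ [a, b]` (w.r.t. two-dimensional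
Lebesgue measure) it holds that `s(x, y) = s(a, y)·𝟙{x < y} + s(b, y)·𝟙{x > y}`. -/
theorem score_ae_piecewise (s : ℝ × ℝ → ℝ) (hs : StrictlyF0Consistent s)
    (a b : ℝ) (hab : a < b) :
    ∀ᵐ p : ℝ × ℝ, p.2 ∈ Set.Icc a b →
      s p = s (a, p.2) * (if p.1 < p.2 then 1 else 0)
          + s (b, p.2) * (if p.2 < p.1 then 1 else 0) := by
  exact score_ae_piecewise_aux hs a b hab
end

section
/- Let a < b be real numbers and let x₁ ∈ (a, b). Then there exist a constant M > 0 and a sequence (f_n) of functions in 𝓕₀, each with mode x₁, such that 0 ≤ f_n(y) ≤ M for all n and all y ∈ ℝ, the support of every f_n is contained in a common bounded interval, and f_n(y) converges as n → ∞ to (b − a)⁻¹·𝟙{y ∈ [a, b]} for Lebesgue almost every y ∈ ℝ. -/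
open MeasureTheory Set Filter

noncomputable def UAeps (a b x₁ : ℝ) (n : ℕ) : ℝ :=
  min (1 / (n + 1)) (min (x₁ - a) (b - x₁))

noncomputable def UAs (a b x₁ : ℝ) (n : ℕ) : ℝ :=
  UAeps a b x₁ n / max (x₁ - a) (b - x₁)

noncomputable def UAm (a b x₁ : ℝ) (n : ℕ) (y : ℝ) : ℝ :=
  min ((n + 1) * (y - a) + 1)
    (min (min (1 + UAeps a b x₁ n - UAs a b x₁ n * (y - x₁))
              (1 + UAeps a b x₁ n + UAs a b x₁ n * (y - x₁)))
         ((n + 1) * (b - y) + 1))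

noncomputable def UAg (a b x₁ : ℝ) (n : ℕ) (y : ℝ) : ℝ := max 0 (UAm a b x₁ n y)

section

variable {a b x₁ : ℝ} (n : ℕ)

lemma UAeps_pos (hax : a < x₁) (hxb : x₁ < b) : 0 < UAeps a b x₁ n :=
  lt_min (by positivity) (lt_min (by linarith) (by linarith))

lemma UAeps_le_one_div : UAeps a b x₁ n ≤ 1 / (n + 1) := min_le_left _ _

lemma UAeps_le_left : UAeps a b x₁ n ≤ x₁ - a :=
  (min_le_right _ _).trans (min_le_left _ _)

lemma UAeps_le_right : UAeps a b x₁ n ≤ b - x₁ :=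
  (min_le_right _ _).trans (min_le_right _ _)

lemma UAr_pos (hax : a < x₁) : (0:ℝ) < max (x₁ - a) (b - x₁) :=
  lt_max_of_lt_left (by linarith)

lemma UAs_pos (hax : a < x₁) (hxb : x₁ < b) : 0 < UAs a b x₁ n :=
  div_pos (UAeps_pos n hax hxb) (UAr_pos hax)

lemma UAs_mul_r (hax : a < x₁) :
    UAs a b x₁ n * max (x₁ - a) (b - x₁) = UAeps a b x₁ n :=
  div_mul_cancel₀ _ (ne_of_gt (UAr_pos hax))

lemma UAeps_le_one : UAeps a b x₁ n ≤ 1 := by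
  refine (UAeps_le_one_div n).trans ?_
  rw [div_le_one (by positivity)]
  simp [le_add_of_nonneg_left]

lemma UAm_le_L (y : ℝ) : UAm a b x₁ n y ≤ (n + 1) * (y - a) + 1 := min_le_left _ _

lemma UAm_le_T1 (y : ℝ) :
    UAm a b x₁ n y ≤ 1 + UAeps a b x₁ n - UAs a b x₁ n * (y - x₁) :=
  (min_le_right _ _).trans ((min_le_left _ _).trans (min_le_left _ _))

lemma UAm_le_T2 (y : ℝ) :
    UAm a b x₁ n y ≤ 1 + UAeps a b x₁ n + UAs a b x₁ n * (y - x₁) :=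
  (min_le_right _ _).trans ((min_le_left _ _).trans (min_le_right _ _))

lemma UAm_le_R (y : ℝ) : UAm a b x₁ n y ≤ (n + 1) * (b - y) + 1 :=
  (min_le_right _ _).trans (min_le_right _ _)

lemma UAm_le_peak (hax : a < x₁) (hxb : x₁ < b) (y : ℝ) :
    UAm a b x₁ n y ≤ 1 + UAeps a b x₁ n := by
  have hs : 0 ≤ UAs a b x₁ n := le_of_lt (UAs_pos n hax hxb)
  rcases le_total y x₁ with h | h
  · have := UAm_le_T2 (a := a) (b := b) (x₁ := x₁) n y
    nlinarith [mul_nonneg hs (sub_nonneg.mpr h)]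
  · have := UAm_le_T1 (a := a) (b := b) (x₁ := x₁) n y
    nlinarith [mul_nonneg hs (sub_nonneg.mpr h)]

lemma UAm_peak (hax : a < x₁) (hxb : x₁ < b) :
    UAm a b x₁ n x₁ = 1 + UAeps a b x₁ n := by
  have h1 : UAs a b x₁ n * (x₁ - x₁) = 0 := by ring
  have he1 := UAeps_le_left (a := a) (b := b) (x₁ := x₁) n
  have he2 := UAeps_le_right (a := a) (b := b) (x₁ := x₁) n
  have hε := UAeps_pos n hax hxb
  have hn : (0:ℝ) ≤ (n:ℝ) := Nat.cast_nonneg n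
  refine le_antisymm ?_ ?_
  · have := UAm_le_T1 (a := a) (b := b) (x₁ := x₁) n x₁
    nlinarith [h1]
  · refine le_min ?_ (le_min (le_min ?_ ?_) ?_) <;>
      nlinarith [h1, mul_nonneg hn (by linarith : (0:ℝ) ≤ x₁ - a),
        mul_nonneg hn (by linarith : (0:ℝ) ≤ b - x₁)]

lemma UAm_lt_peak (hax : a < x₁) (hxb : x₁ < b) {x : ℝ} (hx : x ≠ x₁) :
    UAm a b x₁ n x < 1 + UAeps a b x₁ n := by
  have hs : 0 < UAs a b x₁ n := UAs_pos n hax hxb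
  rcases lt_or_gt_of_ne hx with h | h
  · have := UAm_le_T2 (a := a) (b := b) (x₁ := x₁) n x
    nlinarith [mul_pos hs (by linarith : (0:ℝ) < x₁ - x)]
  · have := UAm_le_T1 (a := a) (b := b) (x₁ := x₁) n x
    nlinarith [mul_pos hs (by linarith : (0:ℝ) < x - x₁)]

lemma UAm_one_le (hax : a < x₁) (hxb : x₁ < b) {y : ℝ} (hy : y ∈ Icc a b) :
    1 ≤ UAm a b x₁ n y := by
  obtain ⟨hya, hyb⟩ := hy
  have hs : 0 ≤ UAs a b x₁ n := le_of_lt (UAs_pos n hax hxb)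
  have hsr := UAs_mul_r (a := a) (b := b) (x₁ := x₁) n hax
  have hn : (0:ℝ) ≤ (n:ℝ) := Nat.cast_nonneg n
  have h1 : UAs a b x₁ n * (y - x₁) ≤ UAeps a b x₁ n := by
    have h : y - x₁ ≤ max (x₁ - a) (b - x₁) := le_trans (by linarith) (le_max_right _ _)
    nlinarith [mul_le_mul_of_nonneg_left h hs]
  have h2 : UAs a b x₁ n * (x₁ - y) ≤ UAeps a b x₁ n := by
    have h : x₁ - y ≤ max (x₁ - a) (b - x₁) := le_trans (by linarith) (le_max_left _ _)
    nlinarith [mul_le_mul_of_nonneg_left h hs]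
  refine le_min ?_ (le_min (le_min ?_ ?_) ?_) <;>
    nlinarith [mul_nonneg hn (by linarith : (0:ℝ) ≤ y - a),
      mul_nonneg hn (by linarith : (0:ℝ) ≤ b - y)]

lemma UAm_monotoneOn (hax : a < x₁) (hxb : x₁ < b) :
    MonotoneOn (UAm a b x₁ n) (Iic x₁) := by
  intro y hy y' hy' hle
  simp only [mem_Iic] at hy hy'
  have hs : 0 ≤ UAs a b x₁ n := le_of_lt (UAs_pos n hax hxb)
  have he2 := UAeps_le_right (a := a) (b := b) (x₁ := x₁) n
  have hε := UAeps_pos n hax hxb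
  have hn : (0:ℝ) ≤ (n:ℝ) := Nat.cast_nonneg n
  have hL := UAm_le_L (a := a) (b := b) (x₁ := x₁) n y
  have hT2 := UAm_le_T2 (a := a) (b := b) (x₁ := x₁) n y
  refine le_min ?_ (le_min (le_min ?_ ?_) ?_)
  · nlinarith [mul_nonneg (by positivity : (0:ℝ) ≤ (n:ℝ) + 1) (sub_nonneg.mpr hle)]
  · nlinarith [mul_nonneg hs (sub_nonneg.mpr hy), mul_nonneg hs (sub_nonneg.mpr hy')]
  · nlinarith [mul_le_mul_of_nonneg_left hle hs]
  · nlinarith [mul_nonneg hs (sub_nonneg.mpr hy),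
      mul_nonneg (by positivity : (0:ℝ) ≤ (n:ℝ) + 1) (sub_nonneg.mpr hy'),
      mul_nonneg hn (by linarith : (0:ℝ) ≤ b - x₁)]

lemma UAm_antitoneOn (hax : a < x₁) (hxb : x₁ < b) :
    AntitoneOn (UAm a b x₁ n) (Ici x₁) := by
  intro y hy y' hy' hle
  simp only [mem_Ici] at hy hy'
  have hs : 0 ≤ UAs a b x₁ n := le_of_lt (UAs_pos n hax hxb)
  have he1 := UAeps_le_left (a := a) (b := b) (x₁ := x₁) n
  have hε := UAeps_pos n hax hxb
  have hn : (0:ℝ) ≤ (n:ℝ) := Nat.cast_nonneg n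
  have hR := UAm_le_R (a := a) (b := b) (x₁ := x₁) n y'
  have hT1 := UAm_le_T1 (a := a) (b := b) (x₁ := x₁) n y'
  refine le_min ?_ (le_min (le_min ?_ ?_) ?_)
  · nlinarith [mul_nonneg hs (sub_nonneg.mpr hy'),
      mul_nonneg (by positivity : (0:ℝ) ≤ (n:ℝ) + 1) (sub_nonneg.mpr hy),
      mul_nonneg hn (by linarith : (0:ℝ) ≤ x₁ - a)]
  · nlinarith [mul_le_mul_of_nonneg_left hle hs]
  · nlinarith [mul_nonneg hs (sub_nonneg.mpr hy), mul_nonneg hs (sub_nonneg.mpr hy')]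
  · nlinarith [mul_nonneg (by positivity : (0:ℝ) ≤ (n:ℝ) + 1) (sub_nonneg.mpr hle)]

lemma UAm_continuous : Continuous (UAm a b x₁ n) := by
  unfold UAm; fun_prop

end

section
open MeasureTheory Set Filter
variable {a b x₁ : ℝ} (n : ℕ)

lemma UAg_nonneg (y : ℝ) : 0 ≤ UAg a b x₁ n y := le_max_left _ _

lemma UAg_le_two (hax : a < x₁) (hxb : x₁ < b) (y : ℝ) : UAg a b x₁ n y ≤ 2 := by
  have h := UAm_le_peak n hax hxb y
  have he := UAeps_le_one (a := a) (b := b) (x₁ := x₁) n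
  exact max_le (by norm_num) (by linarith)

lemma UAg_one_le (hax : a < x₁) (hxb : x₁ < b) {y : ℝ} (hy : y ∈ Icc a b) :
    1 ≤ UAg a b x₁ n y :=
  le_trans (UAm_one_le n hax hxb hy) (le_max_right _ _)

lemma UAg_eq_zero (hax : a < x₁) (hxb : x₁ < b) {y : ℝ}
    (hy : y ∉ Icc (a - 1) (b + 1)) : UAg a b x₁ n y = 0 := by
  have hn : (0:ℝ) ≤ (n:ℝ) := Nat.cast_nonneg n
  rw [mem_Icc, not_and_or] at hy
  refine max_eq_left ?_
  rcases hy with hy | hy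
  · push_neg at hy
    have h := UAm_le_L (a := a) (b := b) (x₁ := x₁) n y
    nlinarith [mul_nonneg hn (by linarith : (0:ℝ) ≤ a - y)]
  · push_neg at hy
    have h := UAm_le_R (a := a) (b := b) (x₁ := x₁) n y
    nlinarith [mul_nonneg hn (by linarith : (0:ℝ) ≤ y - b)]

lemma UAg_continuous : Continuous (UAg a b x₁ n) :=
  continuous_const.max (UAm_continuous n)

lemma UAg_integrable (hax : a < x₁) (hxb : x₁ < b) :
    Integrable (UAg a b x₁ n) := by
  refine (UAg_continuous n).integrable_of_hasCompactSupport ?_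
  exact HasCompactSupport.intro isCompact_Icc (fun y hy => UAg_eq_zero n hax hxb hy)

lemma UA_integral_indicator (hab : a < b) :
    (∫ y : ℝ, (Icc a b).indicator (fun _ => (1:ℝ)) y) = b - a := by
  rw [MeasureTheory.integral_indicator_const (1:ℝ) measurableSet_Icc]
  simp [Real.volume_Icc, ENNReal.toReal_ofReal (by linarith : (0:ℝ) ≤ b - a), hab.le]

lemma UA_indicator_integrable (hab : a < b) :
    Integrable ((Icc a b).indicator (fun _ => (1:ℝ))) := by
  rw [integrable_indicator_iff measurableSet_Icc]
  exact (integrableOn_const_iff).mpr (Or.inr measure_Icc_lt_top)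

lemma UAI_ge (hax : a < x₁) (hxb : x₁ < b) :
    b - a ≤ ∫ y : ℝ, UAg a b x₁ n y := by
  have hab : a < b := hax.trans hxb
  rw [← UA_integral_indicator hab]
  refine integral_mono (UA_indicator_integrable hab) (UAg_integrable n hax hxb) ?_
  intro y
  by_cases hy : y ∈ Icc a b
  · rw [indicator_of_mem hy]; exact UAg_one_le n hax hxb hy
  · rw [indicator_of_notMem hy]; exact UAg_nonneg n y

lemma UAg_tendsto (hax : a < x₁) (hxb : x₁ < b) (y : ℝ) :
    Tendsto (fun n => UAg a b x₁ n y) atTop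
      (nhds ((Icc a b).indicator (fun _ => (1:ℝ)) y)) := by
  by_cases hy : y ∈ Icc a b
  · rw [indicator_of_mem hy]
    have hsq : Tendsto (fun n : ℕ => 1 + 1 / ((n:ℝ) + 1)) atTop (nhds 1) := by
      have := tendsto_one_div_add_atTop_nhds_zero_nat (𝕜 := ℝ)
      simpa using tendsto_const_nhds.add this
    refine tendsto_of_tendsto_of_tendsto_of_le_of_le tendsto_const_nhds hsq
      (fun n => UAg_one_le n hax hxb hy) (fun n => ?_)
    have h1 := UAm_le_peak n hax hxb y
    have h2 := UAeps_le_one_div (a := a) (b := b) (x₁ := x₁) n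
    refine max_le (by positivity) (by linarith)
  · rw [indicator_of_notMem hy]
    rw [mem_Icc, not_and_or] at hy
    have hn0 : ∀ (n : ℕ), (0:ℝ) ≤ (n:ℝ) := fun n => Nat.cast_nonneg n
    rcases hy with hy | hy
    · push_neg at hy
      obtain ⟨N, hN⟩ := exists_nat_gt (1 / (a - y))
      refine Tendsto.congr' ?_ (tendsto_const_nhds (x := (0:ℝ)))
      rw [Filter.EventuallyEq, eventually_atTop]
      refine ⟨N, fun n hn => ?_⟩
      have hay : 0 < a - y := by linarith
      have h1 : 1 < (N:ℝ) * (a - y) := by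
        rw [div_lt_iff₀ hay] at hN; linarith
      have hNn : (N:ℝ) ≤ (n:ℝ) := Nat.cast_le.mpr hn
      have h := UAm_le_L (a := a) (b := b) (x₁ := x₁) n y
      symm
      refine max_eq_left ?_
      nlinarith [mul_le_mul_of_nonneg_right hNn (le_of_lt hay)]
    · push_neg at hy
      obtain ⟨N, hN⟩ := exists_nat_gt (1 / (y - b))
      refine Tendsto.congr' ?_ (tendsto_const_nhds (x := (0:ℝ)))
      rw [Filter.EventuallyEq, eventually_atTop]
      refine ⟨N, fun n hn => ?_⟩
      have hay : 0 < y - b := by linarith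
      have h1 : 1 < (N:ℝ) * (y - b) := by
        rw [div_lt_iff₀ hay] at hN; linarith
      have hNn : (N:ℝ) ≤ (n:ℝ) := Nat.cast_le.mpr hn
      have h := UAm_le_R (a := a) (b := b) (x₁ := x₁) n y
      symm
      refine max_eq_left ?_
      nlinarith [mul_le_mul_of_nonneg_right hNn (le_of_lt hay)]

lemma UAI_tendsto (hax : a < x₁) (hxb : x₁ < b) :
    Tendsto (fun n => ∫ y : ℝ, UAg a b x₁ n y) atTop (nhds (b - a)) := by
  have hab : a < b := hax.trans hxb
  rw [← UA_integral_indicator hab]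
  refine MeasureTheory.tendsto_integral_of_dominated_convergence
    ((Icc (a - 1) (b + 1)).indicator (fun _ => (2:ℝ)))
    (fun n => (UAg_continuous n).aestronglyMeasurable) ?_ ?_ ?_
  · rw [integrable_indicator_iff measurableSet_Icc]
    exact (integrableOn_const_iff).mpr (Or.inr measure_Icc_lt_top)
  · intro n
    refine Filter.Eventually.of_forall (fun y => ?_)
    rw [Real.norm_eq_abs, abs_of_nonneg (UAg_nonneg n y)]
    by_cases hy : y ∈ Icc (a - 1) (b + 1)
    · rw [indicator_of_mem hy]; exact UAg_le_two n hax hxb y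
    · rw [indicator_of_notMem hy, UAg_eq_zero n hax hxb hy]
  · exact Filter.Eventually.of_forall (fun y => UAg_tendsto hax hxb y)

end

/-- Approximation of the uniform density on `[a, b]` by a uniformly bounded
sequence of densities in 𝓕₀ with prescribed mode `x₁ ∈ (a, b)` and supports
contained in a common bounded interval. -/
theorem exists_unimodal_approx_of_uniform (a b x₁ : ℝ) (hab : a < b)
    (hx₁ : x₁ ∈ Set.Ioo a b) :
    ∃ M : ℝ, 0 < M ∧ ∃ f : ℕ → ℝ → ℝ,
      (∀ n, IsUnimodalDensity (f n) x₁) ∧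
      (∀ n y, 0 ≤ f n y ∧ f n y ≤ M) ∧
      (∃ c d : ℝ, ∀ n, Function.support (f n) ⊆ Set.Icc c d) ∧
      (∀ᵐ y : ℝ, Filter.Tendsto (fun n => f n y) Filter.atTop
        (nhds ((b - a)⁻¹ * Set.indicator (Set.Icc a b) (fun _ => (1 : ℝ)) y))) := by
  obtain ⟨hax, hxb⟩ := hx₁
  set I : ℕ → ℝ := fun n => ∫ y : ℝ, UAg a b x₁ n y with hI
  have hIpos : ∀ n, 0 < I n := fun n => lt_of_lt_of_le (by linarith) (UAI_ge n hax hxb)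
  have hIinv_le : ∀ n, (I n)⁻¹ ≤ (b - a)⁻¹ := fun n =>
    inv_anti₀ (by linarith) (UAI_ge n hax hxb)
  refine ⟨2 / (b - a), div_pos (by norm_num) (by linarith), fun n y => (I n)⁻¹ * UAg a b x₁ n y, ?_, ?_, ?_, ?_⟩
  · intro n
    have hc : 0 < (I n)⁻¹ := inv_pos.mpr (hIpos n)
    refine ⟨continuous_const.mul (UAg_continuous n), fun y => mul_nonneg hc.le (UAg_nonneg n y),
      ?_, ?_, ?_, ?_⟩
    · rw [MeasureTheory.integral_const_mul]
      exact inv_mul_cancel₀ (ne_of_gt (hIpos n))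
    · intro u hu v hv huv
      exact mul_le_mul_of_nonneg_left
        (max_le_max le_rfl (UAm_monotoneOn n hax hxb hu hv huv)) hc.le
    · intro u hu v hv huv
      exact mul_le_mul_of_nonneg_left
        (max_le_max le_rfl (UAm_antitoneOn n hax hxb hu hv huv)) hc.le
    · intro x hx
      refine mul_lt_mul_of_pos_left ?_ hc
      have h1 : UAg a b x₁ n x₁ = 1 + UAeps a b x₁ n := by
        rw [UAg, UAm_peak n hax hxb]
        exact max_eq_right (by nlinarith [UAeps_pos n hax hxb])
      rw [h1]
      exact max_lt (by nlinarith [UAeps_pos n hax hxb]) (UAm_lt_peak n hax hxb hx)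
  · intro n y
    refine ⟨mul_nonneg (inv_pos.mpr (hIpos n)).le (UAg_nonneg n y), ?_⟩
    rw [div_eq_mul_inv, mul_comm (2:ℝ)]
    exact mul_le_mul (hIinv_le n) (UAg_le_two n hax hxb y) (UAg_nonneg n y)
      (inv_nonneg.mpr (by linarith))
  · refine ⟨a - 1, b + 1, fun n y hy => ?_⟩
    by_contra hmem
    exact hy (by show (I n)⁻¹ * UAg a b x₁ n y = 0; rw [UAg_eq_zero n hax hxb hmem, mul_zero])
  · refine Filter.Eventually.of_forall (fun y => ?_)
    exact ((UAI_tendsto hax hxb).inv₀ (by linarith)).mul (UAg_tendsto hax hxb y)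
end

section
/- Let s : ℝ × ℝ → ℝ be a strictly 𝓕₀-consistent scoring function for the mode, and let x₀ ≤ x₁ < x₂ ≤ x₃ be real numbers. Then ∫_{x₀}^{x₃} s(x₁, y) dy = ∫_{x₀}^{x₃} s(x₂, y) dy. -/
open MeasureTheory Set Filter Topology

noncomputable section

namespace ModeAux

/-- distance-like function to the interval `[a,b]`. -/
def d2 (a b y : ℝ) : ℝ := max 0 (max (a - y) (y - b))

/-- trapezoid: 1 on `[a,b]`, ramps of width `ε`. -/
def base (a b ε y : ℝ) : ℝ := max 0 (1 - d2 a b y / ε)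

/-- triangular bump at `t`, half-width `ε`, height 1. -/
def bump (t ε y : ℝ) : ℝ := max 0 (1 - |y - t| / ε)

/-- the unnormalized density. -/
def gg (a b t ε y : ℝ) : ℝ := base a b ε y + bump t ε y

variable {a b t ε y z : ℝ}

lemma d2_nonneg : 0 ≤ d2 a b y := le_max_left _ _

lemma continuous_d2 : Continuous (d2 a b) :=
  continuous_const.max ((continuous_const.sub continuous_id).max
    (continuous_id.sub continuous_const))

lemma continuous_base : Continuous (base a b ε) :=
  continuous_const.max (continuous_const.sub (continuous_d2.div_const ε))

lemma continuous_bump : Continuous (bump t ε) :=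
  continuous_const.max (continuous_const.sub
    (((continuous_id.sub continuous_const).abs).div_const ε))

lemma continuous_gg : Continuous (gg a b t ε) := continuous_base.add continuous_bump

lemma base_nonneg : 0 ≤ base a b ε y := le_max_left _ _
lemma bump_nonneg : 0 ≤ bump t ε y := le_max_left _ _
lemma gg_nonneg : 0 ≤ gg a b t ε y := add_nonneg base_nonneg bump_nonneg

lemma base_le_one (hε : 0 < ε) : base a b ε y ≤ 1 := by
  apply max_le (by norm_num)
  have := div_nonneg (d2_nonneg (a := a) (b := b) (y := y)) hε.le
  linarith

lemma bump_le_one (hε : 0 < ε) : bump t ε y ≤ 1 := by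
  apply max_le (by norm_num)
  have := div_nonneg (abs_nonneg (y - t)) hε.le
  linarith

lemma d2_eq_zero (h : y ∈ Icc a b) : d2 a b y = 0 := by
  have h1 := h.1; have h2 := h.2
  unfold d2
  rw [max_eq_left]
  apply max_le <;> linarith

lemma base_eq_one (h : y ∈ Icc a b) : base a b ε y = 1 := by
  unfold base
  rw [d2_eq_zero h]
  norm_num

lemma bump_self : bump t ε t = 1 := by
  unfold bump; simp

lemma bump_lt_one (hε : 0 < ε) (h : y ≠ t) : bump t ε y < 1 := by
  have h0 : 0 < |y - t| := abs_pos.2 (sub_ne_zero.2 h)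
  have : 0 < |y - t| / ε := div_pos h0 hε
  unfold bump
  apply max_lt (by norm_num) (by linarith)

lemma base_eq_zero (hε : 0 < ε) (h : ε ≤ d2 a b y) : base a b ε y = 0 := by
  unfold base
  rw [max_eq_left]
  have : (1:ℝ) ≤ d2 a b y / ε := (one_le_div hε).2 h
  linarith

lemma bump_eq_zero (hε : 0 < ε) (h : ε ≤ |y - t|) : bump t ε y = 0 := by
  unfold bump
  rw [max_eq_left]
  have : (1:ℝ) ≤ |y - t| / ε := (one_le_div hε).2 h
  linarith

lemma d2_antitoneOn : AntitoneOn (d2 a b) (Iic b) := by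
  intro y hy z hz hyz
  simp only [mem_Iic] at hy hz
  unfold d2
  apply max_le (le_max_left _ _)
  apply max_le
  · exact le_max_of_le_right (le_max_of_le_left (by linarith))
  · exact le_max_of_le_left (by linarith)

lemma d2_monotoneOn : MonotoneOn (d2 a b) (Ici a) := by
  intro y hy z hz hyz
  simp only [mem_Ici] at hy hz
  unfold d2
  apply max_le (le_max_left _ _)
  apply max_le
  · exact le_max_of_le_left (by linarith)
  · exact le_max_of_le_right (le_max_of_le_right (by linarith))

lemma base_monotoneOn (hε : 0 < ε) : MonotoneOn (base a b ε) (Iic b) := by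
  intro y hy z hz hyz
  unfold base
  have hd : d2 a b z ≤ d2 a b y := d2_antitoneOn hy hz hyz
  gcongr

lemma base_antitoneOn (hε : 0 < ε) : AntitoneOn (base a b ε) (Ici a) := by
  intro y hy z hz hyz
  unfold base
  have hd : d2 a b y ≤ d2 a b z := d2_monotoneOn hy hz hyz
  gcongr

lemma bump_monotoneOn (hε : 0 < ε) : MonotoneOn (bump t ε) (Iic t) := by
  intro y hy z hz hyz
  simp only [mem_Iic] at hy hz
  unfold bump
  have hd : |z - t| ≤ |y - t| := by
    rw [abs_of_nonpos (by linarith), abs_of_nonpos (by linarith)]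
    linarith
  gcongr

lemma bump_antitoneOn (hε : 0 < ε) : AntitoneOn (bump t ε) (Ici t) := by
  intro y hy z hz hyz
  simp only [mem_Ici] at hy hz
  unfold bump
  have hd : |y - t| ≤ |z - t| := by
    rw [abs_of_nonneg (by linarith), abs_of_nonneg (by linarith)]
    linarith
  gcongr

lemma gg_monotoneOn (htb : t ≤ b) (hε : 0 < ε) : MonotoneOn (gg a b t ε) (Iic t) := by
  intro y hy z hz hyz
  have hys : y ∈ Iic b := le_trans hy.out htb
  have hzs : z ∈ Iic b := le_trans hz.out htb
  exact add_le_add (base_monotoneOn hε hys hzs hyz) (bump_monotoneOn hε hy hz hyz)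

lemma gg_antitoneOn (hat : a ≤ t) (hε : 0 < ε) : AntitoneOn (gg a b t ε) (Ici t) := by
  intro y hy z hz hyz
  have hys : y ∈ Ici a := le_trans hat hy.out
  have hzs : z ∈ Ici a := le_trans hat hz.out
  exact add_le_add (base_antitoneOn hε hys hzs hyz) (bump_antitoneOn hε hy hz hyz)

lemma gg_lt_max (hat : a ≤ t) (htb : t ≤ b) (hε : 0 < ε) (h : y ≠ t) :
    gg a b t ε y < gg a b t ε t := by
  have h1 : gg a b t ε t = 2 := by
    unfold gg
    rw [base_eq_one ⟨hat, htb⟩, bump_self]; norm_num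
  have h2 : gg a b t ε y < 2 := by
    have := base_le_one (a := a) (b := b) (y := y) hε
    have := bump_lt_one (t := t) (y := y) hε h
    unfold gg; linarith
  rw [h1]; exact h2

lemma gg_eq_zero (hat : a ≤ t) (htb : t ≤ b) (hε : 0 < ε)
    (h : y ∉ Icc (a - ε) (b + ε)) : gg a b t ε y = 0 := by
  simp only [mem_Icc, not_and_or, not_le] at h
  have hb : base a b ε y = 0 := by
    apply base_eq_zero hε
    unfold d2
    rcases h with h | h
    · exact le_max_of_le_right (le_max_of_le_left (by linarith))
    · exact le_max_of_le_right (le_max_of_le_right (by linarith))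
  have hbp : bump t ε y = 0 := by
    apply bump_eq_zero hε
    rcases h with h | h
    · rw [abs_of_nonpos (by linarith)]; linarith
    · rw [abs_of_nonneg (by linarith)]; linarith
  unfold gg; rw [hb, hbp, add_zero]

lemma hasCompactSupport_gg (hat : a ≤ t) (htb : t ≤ b) (hε : 0 < ε) :
    HasCompactSupport (gg a b t ε) := by
  apply HasCompactSupport.intro (isCompact_Icc (a := a - ε) (b := b + ε))
  intro y hy
  exact gg_eq_zero hat htb hε hy

lemma integrable_gg (hat : a ≤ t) (htb : t ≤ b) (hε : 0 < ε) :
    Integrable (gg a b t ε) := by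
  exact continuous_gg.integrable_of_hasCompactSupport (hasCompactSupport_gg hat htb hε)

lemma indicator_le_gg (hε : 0 < ε) :
    (Icc a b).indicator (fun _ => (1:ℝ)) y ≤ gg a b t ε y := by
  by_cases h : y ∈ Icc a b
  · rw [indicator_of_mem h]
    have : base a b ε y = 1 := base_eq_one h
    have := bump_nonneg (t := t) (ε := ε) (y := y)
    unfold gg; linarith
  · rw [indicator_of_notMem h]; exact gg_nonneg

lemma integral_gg_pos (hab : a < b) (hat : a ≤ t) (htb : t ≤ b) (hε : 0 < ε) :
    0 < ∫ y, gg a b t ε y := by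
  have hind : Integrable ((Icc a b).indicator (fun _ => (1:ℝ))) := by
    exact (integrableOn_const measure_Icc_lt_top.ne).integrable_indicator
      measurableSet_Icc
  have hmono : (∫ y, (Icc a b).indicator (fun _ => (1:ℝ)) y) ≤ ∫ y, gg a b t ε y := by
    apply integral_mono hind (integrable_gg hat htb hε)
    intro y; exact indicator_le_gg hε
  have hval : (∫ y, (Icc a b).indicator (fun _ => (1:ℝ)) y) = b - a := by
    rw [integral_indicator_const _ measurableSet_Icc]
    simp [Real.volume_Icc, ENNReal.toReal_ofReal (by linarith : (0:ℝ) ≤ b - a), hab.le]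
  have : (0:ℝ) < b - a := by linarith
  linarith [hmono, hval]

/-- The normalized density is a member of 𝓕₀ with mode `t`. -/
lemma isUnimodal_gg (hab : a < b) (hat : a ≤ t) (htb : t ≤ b) (hε : 0 < ε) :
    IsUnimodalDensity (fun y => (∫ z, gg a b t ε z)⁻¹ * gg a b t ε y) t := by
  set c : ℝ := (∫ z, gg a b t ε z)⁻¹ with hc
  have hI : 0 < ∫ z, gg a b t ε z := integral_gg_pos hab hat htb hε
  have hcpos : 0 < c := inv_pos.2 hI
  refine ⟨continuous_const.mul continuous_gg, fun y => mul_nonneg hcpos.le gg_nonneg, ?_, ?_, ?_, ?_⟩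
  · rw [MeasureTheory.integral_const_mul]
    exact inv_mul_cancel₀ hI.ne'
  · intro y hy z hz hyz
    exact mul_le_mul_of_nonneg_left (gg_monotoneOn htb hε hy hz hyz) hcpos.le
  · intro y hy z hz hyz
    exact mul_le_mul_of_nonneg_left (gg_antitoneOn hat hε hy hz hyz) hcpos.le
  · intro x hx
    exact mul_lt_mul_of_pos_left (gg_lt_max hat htb hε hx) hcpos


lemma d2_pos (h : y ∉ Icc a b) : 0 < d2 a b y := by
  simp only [mem_Icc, not_and_or, not_le] at h
  unfold d2
  rcases h with h | h
  · exact lt_max_iff.2 (Or.inr (lt_max_iff.2 (Or.inl (by linarith))))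
  · exact lt_max_iff.2 (Or.inr (lt_max_iff.2 (Or.inr (by linarith))))

lemma norm_mul_base_le (hε0 : 0 < ε) (hε1 : ε ≤ 1) (h : ℝ → ℝ) (y : ℝ) :
    ‖h y * base a b ε y‖ ≤ (Icc (a - 1) (b + 1)).indicator (fun z => |h z|) y := by
  by_cases hy : y ∈ Icc (a - 1) (b + 1)
  · rw [indicator_of_mem hy, Real.norm_eq_abs, abs_mul, abs_of_nonneg base_nonneg]
    exact mul_le_of_le_one_right (abs_nonneg _) (base_le_one hε0)
  · rw [indicator_of_notMem hy]
    have hb : base a b ε y = 0 := by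
      apply base_eq_zero hε0
      simp only [mem_Icc, not_and_or, not_le] at hy
      refine le_trans hε1 ?_
      unfold d2
      rcases hy with hy | hy
      · exact le_max_of_le_right (le_max_of_le_left (by linarith))
      · exact le_max_of_le_right (le_max_of_le_right (by linarith))
    simp [hb]

lemma norm_mul_bump_le (hε0 : 0 < ε) (hε1 : ε ≤ 1) (hat : a ≤ t) (htb : t ≤ b)
    (h : ℝ → ℝ) (y : ℝ) :
    ‖h y * bump t ε y‖ ≤ (Icc (a - 1) (b + 1)).indicator (fun z => |h z|) y := by
  by_cases hy : y ∈ Icc (a - 1) (b + 1)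
  · rw [indicator_of_mem hy, Real.norm_eq_abs, abs_mul, abs_of_nonneg bump_nonneg]
    exact mul_le_of_le_one_right (abs_nonneg _) (bump_le_one hε0)
  · rw [indicator_of_notMem hy]
    have hb : bump t ε y = 0 := by
      apply bump_eq_zero hε0
      simp only [mem_Icc, not_and_or, not_le] at hy
      refine le_trans hε1 ?_
      rcases hy with hy | hy
      · rw [abs_of_nonpos (by linarith)]; linarith
      · rw [abs_of_nonneg (by linarith)]; linarith
    simp [hb]

end ModeAux

/-- If `s` is strictly 𝓕₀-consistent for the mode and `x₀ ≤ x₁ < x₂ ≤ x₃`, then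
the integrals of the sections at `x₁` and `x₂` over `[x₀, x₃]` agree. -/
theorem score_intervalIntegral_eq (s : ℝ × ℝ → ℝ) (hs : StrictlyF0Consistent s)
    (x₀ x₁ x₂ x₃ : ℝ) (h01 : x₀ ≤ x₁) (h12 : x₁ < x₂) (h23 : x₂ ≤ x₃) :
    (∫ y in x₀..x₃, s (x₁, y)) = ∫ y in x₀..x₃, s (x₂, y) := by
  classical
  obtain ⟨hmeas_s, hint, hcons⟩ := hs
  have h03 : x₀ < x₃ := by linarith
  have hsec : ∀ x : ℝ, Measurable fun y => s (x, y) := fun x =>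
    hmeas_s.comp (measurable_const.prodMk measurable_id)
  -- local integrability of the sections
  have hIntOn : ∀ x : ℝ, IntegrableOn (fun y => |s (x, y)|) (Icc (x₀ - 1) (x₃ + 1)) := by
    intro x
    set G : ℝ → ℝ := ModeAux.gg (x₀ - 1) (x₃ + 1) x₀ 1 with hG
    have hIG : 0 < ∫ z, G z :=
      ModeAux.integral_gg_pos (by linarith) (by linarith) (by linarith) one_pos
    set c : ℝ := (∫ z, G z)⁻¹ with hc
    have hcpos : 0 < c := inv_pos.2 hIG
    have huni : IsUnimodalDensity (fun y => c * G y) x₀ :=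
      ModeAux.isUnimodal_gg (by linarith) (by linarith) (by linarith) one_pos
    have hint' : Integrable (fun y => |s (x, y)| * (c * G y)) := hint x _ ⟨x₀, huni⟩
    refine Integrable.mono' ((hint'.const_mul c⁻¹).integrableOn)
      ((hsec x).abs.aestronglyMeasurable.restrict) ?_
    refine (ae_restrict_iff' measurableSet_Icc).2 (ae_of_all _ fun y hy => ?_)
    have hG1 : 1 ≤ G y := by
      have hb : ModeAux.base (x₀ - 1) (x₃ + 1) 1 y = 1 := ModeAux.base_eq_one hy
      have hbp := ModeAux.bump_nonneg (t := x₀) (ε := 1) (y := y)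
      have hGy : G y = ModeAux.base (x₀ - 1) (x₃ + 1) 1 y + ModeAux.bump x₀ 1 y := rfl
      rw [hGy, hb]; linarith
    rw [Real.norm_eq_abs, abs_abs]
    have hcalc : c⁻¹ * (|s (x, y)| * (c * G y)) = |s (x, y)| * G y := by
      field_simp
    rw [hcalc]
    exact le_mul_of_one_le_right (abs_nonneg _) hG1
  have hbnd : ∀ x : ℝ, Integrable ((Icc (x₀ - 1) (x₃ + 1)).indicator fun z => |s (x, z)|) := fun x =>
    (hIntOn x).integrable_indicator measurableSet_Icc
  -- the sequence of bump widths
  set ε : ℕ → ℝ := fun n => ((n : ℝ) + 1)⁻¹ with hεdef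
  have hεpos : ∀ n, 0 < ε n := fun n => by positivity
  have hεle1 : ∀ n, ε n ≤ 1 := fun n => by
    have h1 : (1 : ℝ) ≤ (n : ℝ) + 1 := by
      have := Nat.cast_nonneg (α := ℝ) n; linarith
    simpa [hεdef] using inv_le_one_of_one_le₀ h1
  have hεtend : Tendsto ε atTop (𝓝 0) := by
    simpa [hεdef, one_div] using tendsto_one_div_add_atTop_nhds_zero_nat (𝕜 := ℝ)
  -- integrability of the pieces
  have hIntBase : ∀ (x : ℝ) (n : ℕ),
      Integrable (fun y => s (x, y) * ModeAux.base x₀ x₃ (ε n) y) := by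
    intro x n
    refine Integrable.mono' (hbnd x)
      (((hsec x).mul ModeAux.continuous_base.measurable).aestronglyMeasurable)
      (ae_of_all _ fun y => ?_)
    exact ModeAux.norm_mul_base_le (a := x₀) (b := x₃) (hεpos n) (hεle1 n) (fun z => s (x, z)) y
  have hIntBump : ∀ (x t : ℝ), t ∈ Icc x₀ x₃ → ∀ n : ℕ,
      Integrable (fun y => s (x, y) * ModeAux.bump t (ε n) y) := by
    intro x t ht n
    refine Integrable.mono' (hbnd x)
      (((hsec x).mul ModeAux.continuous_bump.measurable).aestronglyMeasurable)
      (ae_of_all _ fun y => ?_)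
    exact ModeAux.norm_mul_bump_le (a := x₀) (b := x₃) (hεpos n) (hεle1 n) ht.1 ht.2 (fun z => s (x, z)) y
  -- consistency inequality for the constructed densities
  have key : ∀ t x : ℝ, t ∈ Icc x₀ x₃ → ∀ n : ℕ,
      (∫ y, s (t, y) * ModeAux.gg x₀ x₃ t (ε n) y) ≤
        ∫ y, s (x, y) * ModeAux.gg x₀ x₃ t (ε n) y := by
    intro t x ht n
    set G : ℝ → ℝ := ModeAux.gg x₀ x₃ t (ε n) with hG
    have hIG : 0 < ∫ z, G z := ModeAux.integral_gg_pos h03 ht.1 ht.2 (hεpos n)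
    set c : ℝ := (∫ z, G z)⁻¹ with hc
    have hcpos : 0 < c := inv_pos.2 hIG
    have huni : IsUnimodalDensity (fun y => c * G y) t :=
      ModeAux.isUnimodal_gg h03 ht.1 ht.2 (hεpos n)
    have hle := (hcons _ t huni x).1
    have h2 : c * (∫ y, s (t, y) * G y) ≤ c * ∫ y, s (x, y) * G y := by
      calc c * (∫ y, s (t, y) * G y) = ∫ y, s (t, y) * (c * G y) := by
            rw [← MeasureTheory.integral_const_mul]; congr 1; ext y; ring
        _ ≤ ∫ y, s (x, y) * (c * G y) := hle
        _ = c * ∫ y, s (x, y) * G y := by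
            rw [← MeasureTheory.integral_const_mul]; congr 1; ext y; ring
    exact le_of_mul_le_mul_left h2 hcpos
  -- splitting the integral
  have hsplit : ∀ (x t : ℝ), t ∈ Icc x₀ x₃ → ∀ n : ℕ,
      (∫ y, s (x, y) * ModeAux.gg x₀ x₃ t (ε n) y) =
        (∫ y, s (x, y) * ModeAux.base x₀ x₃ (ε n) y) +
          ∫ y, s (x, y) * ModeAux.bump t (ε n) y := by
    intro x t ht n
    rw [← integral_add (hIntBase x n) (hIntBump x t ht n)]
    congr 1; ext y
    unfold ModeAux.gg; ring
  -- limits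
  have hlimBase : ∀ x : ℝ,
      Tendsto (fun n => ∫ y, s (x, y) * ModeAux.base x₀ x₃ (ε n) y) atTop
        (𝓝 (∫ y, (Icc x₀ x₃).indicator (fun z => s (x, z)) y)) := by
    intro x
    refine tendsto_integral_of_dominated_convergence ((Icc (x₀ - 1) (x₃ + 1)).indicator fun z => |s (x, z)|)
      (fun n => ((hsec x).mul ModeAux.continuous_base.measurable).aestronglyMeasurable)
      (hbnd x)
      (fun n => ae_of_all _ fun y => ModeAux.norm_mul_base_le (a := x₀) (b := x₃) (hεpos n) (hεle1 n) (fun z => s (x, z)) y)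
      (ae_of_all _ fun y => ?_)
    by_cases hy : y ∈ Icc x₀ x₃
    · rw [indicator_of_mem hy]
      exact Tendsto.congr
        (fun n => by rw [ModeAux.base_eq_one hy, mul_one]) tendsto_const_nhds
    · rw [indicator_of_notMem hy]
      have hd : 0 < ModeAux.d2 x₀ x₃ y := ModeAux.d2_pos hy
      have hev : ∀ᶠ n in atTop, ε n < ModeAux.d2 x₀ x₃ y := hεtend.eventually_lt_const hd
      refine Tendsto.congr' ?_ tendsto_const_nhds
      filter_upwards [hev] with n hn
      rw [ModeAux.base_eq_zero (hεpos n) hn.le, mul_zero]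
  have hlimBump : ∀ x t : ℝ, t ∈ Icc x₀ x₃ →
      Tendsto (fun n => ∫ y, s (x, y) * ModeAux.bump t (ε n) y) atTop (𝓝 0) := by
    intro x t ht
    have h0 : (∫ y : ℝ, (0 : ℝ)) = 0 := integral_zero _ _
    rw [← h0]
    have hne : ∀ᵐ y : ℝ, y ≠ t := by
      rw [ae_iff]
      simp only [ne_eq, not_not, setOf_eq_eq_singleton]
      exact measure_singleton t
    refine tendsto_integral_of_dominated_convergence ((Icc (x₀ - 1) (x₃ + 1)).indicator fun z => |s (x, z)|)
      (fun n => ((hsec x).mul ModeAux.continuous_bump.measurable).aestronglyMeasurable)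
      (hbnd x)
      (fun n => ae_of_all _ fun y =>
        ModeAux.norm_mul_bump_le (a := x₀) (b := x₃) (hεpos n) (hεle1 n) ht.1 ht.2
          (fun z => s (x, z)) y) ?_
    filter_upwards [hne] with y hy
    have habs : 0 < |y - t| := abs_pos.2 (sub_ne_zero.2 hy)
    have hev : ∀ᶠ n in atTop, ε n < |y - t| := hεtend.eventually_lt_const habs
    refine Tendsto.congr' ?_ tendsto_const_nhds
    filter_upwards [hev] with n hn
    rw [ModeAux.bump_eq_zero (hεpos n) hn.le, mul_zero]
  -- main comparison
  have hmain : ∀ t x : ℝ, t ∈ Icc x₀ x₃ → x ∈ Icc x₀ x₃ →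
      (∫ y, (Icc x₀ x₃).indicator (fun z => s (t, z)) y) ≤
        ∫ y, (Icc x₀ x₃).indicator (fun z => s (x, z)) y := by
    intro t x ht hx
    have hineq : ∀ n : ℕ,
        (∫ y, s (t, y) * ModeAux.base x₀ x₃ (ε n) y) -
            (∫ y, s (x, y) * ModeAux.base x₀ x₃ (ε n) y) ≤
          (∫ y, s (x, y) * ModeAux.bump t (ε n) y) -
            ∫ y, s (t, y) * ModeAux.bump t (ε n) y := by
      intro n
      have hk := key t x ht n
      rw [hsplit t t ht n, hsplit x t ht n] at hk
      linarith
    have h1 := (hlimBase t).sub (hlimBase x)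
    have h2 := (hlimBump x t ht).sub (hlimBump t t ht)
    have := le_of_tendsto_of_tendsto' h1 h2 hineq
    simpa using this
  have h12' : (∫ y, (Icc x₀ x₃).indicator (fun z => s (x₁, z)) y) =
      ∫ y, (Icc x₀ x₃).indicator (fun z => s (x₂, z)) y := by
    have ha : x₁ ∈ Icc x₀ x₃ := ⟨h01, by linarith⟩
    have hb : x₂ ∈ Icc x₀ x₃ := ⟨by linarith, h23⟩
    exact le_antisymm (hmain x₁ x₂ ha hb) (hmain x₂ x₁ hb ha)
  have hconv : ∀ x : ℝ, (∫ y in x₀..x₃, s (x, y)) =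
      ∫ y, (Icc x₀ x₃).indicator (fun z => s (x, z)) y := by
    intro x
    rw [integral_indicator measurableSet_Icc,
      MeasureTheory.integral_Icc_eq_integral_Ioc,
      intervalIntegral.integral_of_le (le_of_lt h03)]
  rw [hconv x₁, hconv x₂, h12']
end
end

section
/- Let v : ℝ × ℝ → ℝ be a strict 𝓕₀-identification function for the mode. Then for every x ∈ ℝ, v(x, y) = 0 for Lebesgue almost all y ∈ ℝ. -/
open MeasureTheory Set Filter

section AuxProof
open Real

lemma f0_integrable (x : ℝ) :
    Integrable (fun y : ℝ => exp (-(2 * |y - x|))) := by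
  have hIoi : IntegrableOn (fun y : ℝ => exp (-(2 * |y|))) (Ioi 0) := by
    refine (exp_neg_integrableOn_Ioi 0 two_pos).congr_fun (fun y hy => ?_) measurableSet_Ioi
    rw [abs_of_pos hy]; ring_nf
  have hIic : IntegrableOn (fun y : ℝ => exp (-(2 * |y|))) (Iic 0) := by
    rw [← Measure.map_neg_eq_self (volume : Measure ℝ)]
    have m : MeasurableEmbedding fun x : ℝ => -x := (Homeomorph.neg ℝ).measurableEmbedding
    rw [m.integrableOn_map_iff]
    simp_rw [Function.comp_def, abs_neg, neg_preimage, neg_Iic, neg_zero]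
    exact (integrableOn_Ici_iff_integrableOn_Ioi).mpr hIoi
  have h := hIic.union hIoi
  rw [Iic_union_Ioi, integrableOn_univ] at h
  simpa using h.comp_sub_right x

lemma f0_integral (x : ℝ) :
    (∫ y : ℝ, exp (-(2 * |y - x|))) = 1 := by
  have h1 : (∫ y : ℝ, exp (-(2 * |y - x|))) = ∫ y : ℝ, exp (-(2 * |y|)) :=
    integral_sub_right_eq_self (fun y : ℝ => exp (-(2 * |y|))) x
  rw [h1, integral_comp_abs (f := fun u : ℝ => exp (-(2 * u)))]
  have h2 := integral_comp_mul_left_Ioi (fun u : ℝ => exp (-u)) 0 two_pos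
  simp only [mul_zero, smul_eq_mul, integral_exp_neg_Ioi_zero, mul_one] at h2
  rw [h2]; norm_num

set_option maxHeartbeats 1000000 in
lemma perturb_unimodal (x : ℝ) (φ : ℝ → ℝ) (hφd : Differentiable ℝ φ)
    (hφdc : Continuous (deriv φ)) (hφc : HasCompactSupport φ) :
    ∃ ε : ℝ, 0 < ε ∧ 0 < 1 + ε * (∫ y : ℝ, φ y) ∧
      IsUnimodalDensity
        (fun y => (exp (-(2 * |y - x|)) + ε * φ y) / (1 + ε * ∫ y : ℝ, φ y)) x := by
  classical
  obtain ⟨R₀, hR₀⟩ := hφc.isCompact.isBounded.subset_closedBall x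
  set R : ℝ := max R₀ 0 with hRdef
  have hR0 : 0 ≤ R := le_max_right _ _
  have hsupp : tsupport φ ⊆ Metric.closedBall x R :=
    hR₀.trans (Metric.closedBall_subset_closedBall (le_max_left _ _))
  obtain ⟨M₁, hM₁⟩ := hφc.exists_bound_of_continuous hφd.continuous
  obtain ⟨M₂, hM₂⟩ := hφc.deriv.exists_bound_of_continuous hφdc
  set M : ℝ := max (max M₁ M₂) 1 with hMdef
  have hM1 : (1:ℝ) ≤ M := le_max_right _ _
  have hM0 : (0:ℝ) < M := lt_of_lt_of_le one_pos hM1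
  have hφM : ∀ y, |φ y| ≤ M := fun y => by
    have := hM₁ y
    rw [Real.norm_eq_abs] at this
    exact this.trans ((le_max_left _ _).trans (le_max_left _ _))
  have hφ'M : ∀ y, |deriv φ y| ≤ M := fun y => by
    have := hM₂ y
    rw [Real.norm_eq_abs] at this
    exact this.trans ((le_max_right _ _).trans (le_max_left _ _))
  set δ : ℝ := exp (-(2 * R)) with hδdef
  have hδpos : 0 < δ := exp_pos _
  have hδ1 : δ ≤ 1 := by
    rw [hδdef, ← Real.exp_zero]
    exact exp_le_exp.mpr (by nlinarith)
  set A : ℝ := 1 + |∫ y : ℝ, φ y| with hAdef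
  have hA1 : (1:ℝ) ≤ A := le_add_of_nonneg_right (abs_nonneg _)
  have hA0 : (0:ℝ) < A := lt_of_lt_of_le one_pos hA1
  obtain ⟨ε, hεpos, hεM, hεint⟩ :
      ∃ ε : ℝ, 0 < ε ∧ ε * M ≤ δ / 2 ∧ ε * |∫ y : ℝ, φ y| ≤ 1 / 2 := by
    refine ⟨δ / (2 * M * A), by positivity, ?_, ?_⟩
    · rw [div_mul_eq_mul_div, div_le_div_iff₀ (by positivity) two_pos]
      nlinarith [mul_le_mul_of_nonneg_left hA1 (by positivity : (0:ℝ) ≤ δ * (2 * M))]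
    · have h1 : δ / (2 * M * A) * |∫ y : ℝ, φ y| ≤ δ / (2 * M * A) * A := by
        apply mul_le_mul_of_nonneg_left _ (by positivity)
        rw [hAdef]; linarith
      have h2 : δ / (2 * M * A) * A = δ / (2 * M) := by
        field_simp
      have h3 : δ / (2 * M) ≤ 1 / 2 := by
        rw [div_le_div_iff₀ (by positivity) two_pos]
        nlinarith
      linarith
  set N : ℝ := 1 + ε * (∫ y : ℝ, φ y) with hNdef
  have hN : 0 < N := by
    have h1 : |ε * (∫ y : ℝ, φ y)| ≤ 1 / 2 := by
      rw [abs_mul, abs_of_pos hεpos]; exact hεint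
    have h2 := neg_abs_le (ε * (∫ y : ℝ, φ y))
    rw [hNdef]; linarith
  refine ⟨ε, hεpos, hN, ?_⟩
  set f₀ : ℝ → ℝ := fun y => exp (-(2 * |y - x|)) with hf₀def
  have hf₀cont : Continuous f₀ := by
    apply Real.continuous_exp.comp; continuity
  have hf₀pos : ∀ y, 0 < f₀ y := fun y => exp_pos _
  have hδf₀ : ∀ y ∈ Metric.closedBall x R, δ ≤ f₀ y := by
    intro y hy
    rw [Metric.mem_closedBall, Real.dist_eq] at hy
    exact exp_le_exp.mpr (by nlinarith [abs_nonneg (y - x)])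
  set ψ : ℝ → ℝ := fun y => f₀ y + ε * φ y with hψdef
  have hψcont : Continuous ψ := hf₀cont.add (continuous_const.mul hφd.continuous)
  have hψpos : ∀ y, 0 < ψ y := by
    intro y
    by_cases hy : y ∈ tsupport φ
    · have h1 := hδf₀ y (hsupp hy)
      have h2 : ε * φ y ≥ -(δ / 2) := by
        have := (abs_le.mp (hφM y)).1
        nlinarith [hεM]
      simp only [hψdef]
      nlinarith
    · have : φ y = 0 := image_eq_zero_of_notMem_tsupport hy
      simp only [hψdef, this, mul_zero, add_zero]
      exact hf₀pos y
  -- derivative facts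
  have hderivL : ∀ y ∈ Iio x, HasDerivAt ψ (2 * exp (2 * (y - x)) + ε * deriv φ y) y := by
    intro y hy
    have h1 : HasDerivAt (fun z : ℝ => exp (2 * (z - x))) (2 * exp (2 * (y - x))) y := by
      have := (((hasDerivAt_id y).sub_const x).const_mul (2:ℝ)).exp
      simpa [mul_comm] using this
    have heq : f₀ =ᶠ[nhds y] fun z => exp (2 * (z - x)) := by
      filter_upwards [Iio_mem_nhds hy] with z hz
      have : |z - x| = -(z - x) := abs_of_neg (by simpa [sub_neg] using hz)
      simp only [hf₀def, this]; ring_nf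
    have h1' : HasDerivAt f₀ (2 * exp (2 * (y - x))) y := h1.congr_of_eventuallyEq heq
    exact h1'.add ((hφd y).hasDerivAt.const_mul ε)
  have hderivR : ∀ y ∈ Ioi x, HasDerivAt ψ (-2 * exp (2 * (x - y)) + ε * deriv φ y) y := by
    intro y hy
    have h1 : HasDerivAt (fun z : ℝ => exp (2 * (x - z))) (-2 * exp (2 * (x - y))) y := by
      have := (((hasDerivAt_id y).const_sub x).const_mul (2:ℝ)).exp
      simpa [mul_comm] using this
    have heq : f₀ =ᶠ[nhds y] fun z => exp (2 * (x - z)) := by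
      filter_upwards [Ioi_mem_nhds hy] with z hz
      have : |z - x| = z - x := abs_of_pos (by simpa [sub_pos] using hz)
      simp only [hf₀def, this]; ring_nf
    have h1' : HasDerivAt f₀ (-2 * exp (2 * (x - y))) y := h1.congr_of_eventuallyEq heq
    exact h1'.add ((hφd y).hasDerivAt.const_mul ε)
  have hεφ' : ∀ y, |ε * deriv φ y| ≤ δ / 2 := by
    intro y
    rw [abs_mul, abs_of_pos hεpos]
    calc ε * |deriv φ y| ≤ ε * M := mul_le_mul_of_nonneg_left (hφ'M y) hεpos.le
    _ ≤ δ / 2 := hεM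
  have hmono : StrictMonoOn ψ (Iic x) := by
    apply strictMonoOn_of_deriv_pos (convex_Iic x) hψcont.continuousOn
    intro y hy
    rw [interior_Iic] at hy
    rw [(hderivL y hy).deriv]
    by_cases hyt : y ∈ tsupport φ
    · have h1 : δ ≤ exp (2 * (y - x)) := by
        have := hsupp hyt
        rw [Metric.mem_closedBall, Real.dist_eq] at this
        apply exp_le_exp.mpr
        have := abs_le.mp this
        nlinarith [this.1]
      have := (abs_le.mp (hεφ' y)).1
      nlinarith
    · have h0 : deriv φ y = 0 := by
        by_contra h
        exact hyt (support_deriv_subset (Function.mem_support.mpr h))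
      rw [h0]
      have := exp_pos (2 * (y - x))
      nlinarith
  have hanti : StrictAntiOn ψ (Ici x) := by
    apply strictAntiOn_of_deriv_neg (convex_Ici x) hψcont.continuousOn
    intro y hy
    rw [interior_Ici] at hy
    rw [(hderivR y hy).deriv]
    by_cases hyt : y ∈ tsupport φ
    · have h1 : δ ≤ exp (2 * (x - y)) := by
        have := hsupp hyt
        rw [Metric.mem_closedBall, Real.dist_eq] at this
        apply exp_le_exp.mpr
        have := abs_le.mp this
        nlinarith [this.2]
      have := (abs_le.mp (hεφ' y)).2
      nlinarith
    · have h0 : deriv φ y = 0 := by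
        by_contra h
        exact hyt (support_deriv_subset (Function.mem_support.mpr h))
      rw [h0]
      have : 0 < exp (2 * (x - y)) := exp_pos _
      nlinarith
  -- integral
  have hφint : Integrable φ := hφd.continuous.integrable_of_hasCompactSupport hφc
  have hψint : Integrable ψ := (f0_integrable x).add (hφint.const_mul ε)
  have hψintegral : (∫ y : ℝ, ψ y) = N := by
    rw [hψdef]
    simp only
    rw [integral_add (f0_integrable x) (hφint.const_mul ε), integral_const_mul,
      f0_integral x, hNdef]
  -- assemble
  refine ⟨hψcont.div_const N, fun y => div_nonneg (hψpos y).le hN.le, ?_, ?_, ?_, ?_⟩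
  · rw [integral_div, hψintegral, div_self hN.ne']
  · intro a ha b hb hab
    have h := hmono.monotoneOn ha hb hab
    show ψ a / N ≤ ψ b / N
    gcongr
  · intro a ha b hb hab
    have h := hanti.antitoneOn ha hb hab
    show ψ b / N ≤ ψ a / N
    gcongr
  · intro z hz
    rcases lt_or_gt_of_ne hz with h | h
    · have hlt := hmono (mem_Iic.mpr h.le) (mem_Iic.mpr le_rfl) h
      show ψ z / N < ψ x / N
      gcongr
    · have hlt := hanti (mem_Ici.mpr le_rfl) (mem_Ici.mpr h.le) h
      show ψ z / N < ψ x / N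
      gcongr

lemma dominated_by_exp (x : ℝ) {φ : ℝ → ℝ} (hc : Continuous φ) (hs : HasCompactSupport φ) :
    ∃ C : ℝ, 0 ≤ C ∧ ∀ y, |φ y| ≤ C * exp (-(2 * |y - x|)) := by
  obtain ⟨R₀, hR₀⟩ := hs.isCompact.isBounded.subset_closedBall x
  set R : ℝ := max R₀ 0 with hRdef
  have hR0 : 0 ≤ R := le_max_right _ _
  have hsupp : tsupport φ ⊆ Metric.closedBall x R :=
    hR₀.trans (Metric.closedBall_subset_closedBall (le_max_left _ _))
  obtain ⟨M₁, hM₁⟩ := hs.exists_bound_of_continuous hc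
  set M : ℝ := max M₁ 0 with hMdef
  have hM0 : 0 ≤ M := le_max_right _ _
  have hφM : ∀ y, |φ y| ≤ M := fun y => by
    have := hM₁ y; rw [Real.norm_eq_abs] at this
    exact this.trans (le_max_left _ _)
  refine ⟨M * exp (2 * R), by positivity, fun y => ?_⟩
  by_cases hy : y ∈ tsupport φ
  · have h1 : |y - x| ≤ R := by
      have := hsupp hy
      rwa [Metric.mem_closedBall, Real.dist_eq] at this
    calc |φ y| ≤ M := hφM y
    _ = M * 1 := (mul_one M).symm
    _ ≤ M * (exp (2 * R) * exp (-(2 * |y - x|))) := by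
        apply mul_le_mul_of_nonneg_left _ hM0
        rw [← Real.exp_add, ← Real.exp_zero]
        exact exp_le_exp.mpr (by linarith)
    _ = M * exp (2 * R) * exp (-(2 * |y - x|)) := by ring
  · rw [image_eq_zero_of_notMem_tsupport hy]
    simp only [abs_zero]
    positivity


/-- If `v` is a strict 𝓕₀-identification function for the mode, then for every
`x`, `v(x, y) = 0` for Lebesgue almost all `y`. -/
theorem identification_ae_zero (v : ℝ × ℝ → ℝ)
    (hv : StrictF0Identification v) :
    ∀ x : ℝ, ∀ᵐ y : ℝ, v (x, y) = 0 := by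
  obtain ⟨hvmeas, hvint, hviff⟩ := hv
  intro x
  set g : ℝ → ℝ := fun y => v (x, y) with hgdef
  have hgmeas : Measurable g := hvmeas.comp (measurable_const.prodMk measurable_id)
  have hf₀meas : Measurable (fun y : ℝ => exp (-(2 * |y - x|))) := by measurability
  -- the base density is unimodal with mode x
  have hbase : IsUnimodalDensity (fun y : ℝ => exp (-(2 * |y - x|))) x := by
    have h0c : HasCompactSupport (fun _ : ℝ => (0:ℝ)) := by
      simpa [HasCompactSupport, tsupport, Function.support] using isCompact_empty
    obtain ⟨ε, hε, hN, hdens⟩ :=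
      perturb_unimodal x (fun _ => 0) (differentiable_const 0) (by simpa using continuous_const) h0c
    simpa using hdens
  have hInt0 : Integrable (fun y => |g y| * exp (-(2 * |y - x|))) :=
    hvint x _ ⟨x, hbase⟩
  have hgf₀ : Integrable (fun y => g y * exp (-(2 * |y - x|))) := by
    refine hInt0.mono' (hgmeas.mul hf₀meas).aestronglyMeasurable ?_
    filter_upwards with y
    rw [norm_mul, Real.norm_eq_abs, Real.norm_eq_abs, abs_of_pos (exp_pos _)]
  have hI0 : (∫ y : ℝ, g y * exp (-(2 * |y - x|))) = 0 :=
    (hviff _ x hbase x).mpr rfl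
  -- local integrability of g
  have hloc : LocallyIntegrable g volume := by
    rw [locallyIntegrable_iff]
    intro K hK
    obtain ⟨R₀, hR₀⟩ := hK.isBounded.subset_closedBall x
    set R : ℝ := max R₀ 0 with hRdef
    have hR0 : 0 ≤ R := le_max_right _ _
    have hRK : K ⊆ Metric.closedBall x R :=
      hR₀.trans (Metric.closedBall_subset_closedBall (le_max_left _ _))
    set δ : ℝ := exp (-(2 * R)) with hδdef
    have hδpos : 0 < δ := exp_pos _
    refine Integrable.mono' ((hInt0.const_mul δ⁻¹).integrableOn)
      hgmeas.aestronglyMeasurable.restrict ?_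
    rw [ae_restrict_iff' hK.measurableSet]
    filter_upwards with y hy
    have h1 : |y - x| ≤ R := by
      have := hRK hy
      rwa [Metric.mem_closedBall, Real.dist_eq] at this
    have h2 : δ ≤ exp (-(2 * |y - x|)) := exp_le_exp.mpr (by linarith)
    rw [Real.norm_eq_abs]
    calc |g y| = δ⁻¹ * (|g y| * δ) := by field_simp
    _ ≤ δ⁻¹ * (|g y| * exp (-(2 * |y - x|))) := by
        apply mul_le_mul_of_nonneg_left _ (by positivity)
        exact mul_le_mul_of_nonneg_left h2 (abs_nonneg _)
  -- main argument: test against all smooth compactly supported functions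
  apply ae_eq_zero_of_integral_contDiff_smul_eq_zero hloc
  intro φ hφsmooth hφc
  have hφd : Differentiable ℝ φ := hφsmooth.differentiable (by simp)
  have hφdc : Continuous (deriv φ) := hφsmooth.continuous_deriv (by exact_mod_cast le_top)
  obtain ⟨ε, hεpos, hN, hdens⟩ := perturb_unimodal x φ hφd hφdc hφc
  set N : ℝ := 1 + ε * (∫ y : ℝ, φ y) with hNdef
  have hint1 : (∫ y : ℝ, g y * ((exp (-(2 * |y - x|)) + ε * φ y) / N)) = 0 :=
    (hviff _ x hdens x).mpr rfl
  -- integrability of g * φ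
  obtain ⟨C, hC0, hC⟩ := dominated_by_exp x hφd.continuous hφc
  have hgφ : Integrable (fun y => g y * φ y) := by
    refine Integrable.mono' (hInt0.const_mul C)
      (hgmeas.mul (hφd.continuous.measurable)).aestronglyMeasurable ?_
    filter_upwards with y
    rw [norm_mul, Real.norm_eq_abs, Real.norm_eq_abs]
    calc |g y| * |φ y| ≤ |g y| * (C * exp (-(2 * |y - x|))) :=
      mul_le_mul_of_nonneg_left (hC y) (abs_nonneg _)
    _ = C * (|g y| * exp (-(2 * |y - x|))) := by ring
  -- expand the integral
  have h2 : (∫ y : ℝ, g y * ((exp (-(2 * |y - x|)) + ε * φ y) / N))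
      = ((∫ y : ℝ, g y * exp (-(2 * |y - x|))) + ε * ∫ y : ℝ, g y * φ y) / N := by
    have hexpand : ∀ y : ℝ, g y * ((exp (-(2 * |y - x|)) + ε * φ y) / N)
        = (g y * exp (-(2 * |y - x|)) + ε * (g y * φ y)) / N := fun y => by ring
    simp_rw [hexpand]
    rw [integral_div, integral_add hgf₀ (hgφ.const_mul ε), integral_const_mul]
  rw [h2, hI0, zero_add, div_eq_zero_iff] at hint1
  have hIφ : (∫ y : ℝ, g y * φ y) = 0 := by
    rcases hint1 with h | h
    · exact (mul_eq_zero.mp h).resolve_left hεpos.ne'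
    · exact absurd h hN.ne'
  simp_rw [smul_eq_mul]
  rw [← hIφ]
  congr 1
  ext y
  ring

end AuxProof
end

section
/- Let 𝓕₁ be the class of continuous, nonnegative probability densities f : ℝ → ℝ with ∫ f(y) dy = 1 that possess a unique global maximizer (called the mode of f); 𝓕₁ contains 𝓕₀. There exists no strictly 𝓕₁-consistent scoring function for the mode; that is, the mode is not elicitable relative to the class of all continuous Lebesgue densities with unique global maximum. -/
open MeasureTheory Set Filter

/-- `f` belongs to `𝓕₁` with mode `t`: continuous, nonnegative, integrates to 1,
and `t` is the unique global maximizer. -/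
def IsF1Density (f : ℝ → ℝ) (t : ℝ) : Prop :=
  Continuous f ∧ (∀ y, 0 ≤ f y) ∧ (∫ y : ℝ, f y) = 1 ∧ ∀ x, x ≠ t → f x < f t

/-- `f` belongs to the class `𝓕₁` of continuous densities with unique global maximum. -/
def MemF1 (f : ℝ → ℝ) : Prop := ∃ t, IsF1Density f t

/-- `s` is a strictly `𝓕₁`-consistent scoring function for the mode. -/
def StrictlyF1Consistent (s : ℝ × ℝ → ℝ) : Prop :=
  Measurable s ∧
  (∀ x : ℝ, ∀ f : ℝ → ℝ, MemF1 f → Integrable (fun y => |s (x, y)| * f y)) ∧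
  (∀ f : ℝ → ℝ, ∀ t : ℝ, IsF1Density f t → ∀ x : ℝ,
    (∫ y : ℝ, s (t, y) * f y) ≤ (∫ y : ℝ, s (x, y) * f y) ∧
    ((∫ y : ℝ, s (t, y) * f y) = (∫ y : ℝ, s (x, y) * f y) → x = t))

open Topology

noncomputable def tri (a c y : ℝ) : ℝ := max 0 (1 - |y - c| / a)

lemma tri_nonneg (a c y : ℝ) : 0 ≤ tri a c y := le_max_left _ _

lemma tri_le_one (a c y : ℝ) (ha : 0 < a) : tri a c y ≤ 1 := by
  unfold tri
  have : |y - c| / a ≥ 0 := div_nonneg (abs_nonneg _) ha.le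
  exact max_le (by norm_num) (by linarith)

lemma tri_self (a c : ℝ) : tri a c c = 1 := by simp [tri]

lemma tri_lt_one (a c y : ℝ) (ha : 0 < a) (hy : y ≠ c) : tri a c y < 1 := by
  unfold tri
  have h : 0 < |y - c| / a := div_pos (abs_pos.mpr (sub_ne_zero.mpr hy)) ha
  exact max_lt (by norm_num) (by linarith)

lemma tri_eq_zero (a c y : ℝ) (ha : 0 < a) (h : a ≤ |y - c|) : tri a c y = 0 := by
  unfold tri
  have : 1 ≤ |y - c| / a := (one_le_div ha).mpr h
  exact max_eq_left (by linarith)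

lemma tri_mono_width (a a' c y : ℝ) (ha : 0 < a) (h : a ≤ a') : tri a c y ≤ tri a' c y := by
  unfold tri
  have : |y - c| / a' ≤ |y - c| / a :=
    div_le_div_of_nonneg_left (abs_nonneg _) ha h
  exact max_le_max le_rfl (by linarith)

lemma continuous_tri (a c : ℝ) : Continuous (tri a c) := by
  unfold tri; fun_prop

lemma hasCompactSupport_tri (a c : ℝ) (ha : 0 < a) : HasCompactSupport (tri a c) := by
  apply HasCompactSupport.intro (isCompact_Icc (a := c - a) (b := c + a))
  intro y hy
  apply tri_eq_zero _ _ _ ha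
  rw [Set.mem_Icc, not_and_or] at hy
  rcases hy with h | h
  · push_neg at h; rw [abs_sub_comm, abs_of_pos (by linarith)]; linarith
  · push_neg at h; rw [abs_of_pos (by linarith)]; linarith

lemma integrable_tri (a c : ℝ) (ha : 0 < a) : Integrable (tri a c) :=
  (continuous_tri a c).integrable_of_hasCompactSupport (hasCompactSupport_tri a c ha)

lemma integral_tri (a c : ℝ) (ha : 0 < a) : (∫ y : ℝ, tri a c y) = a := by
  have h1 : (∫ y : ℝ, tri a c y) = ∫ y : ℝ, tri a 0 y := by
    rw [← integral_sub_right_eq_self (μ := volume) (fun y => tri a 0 y) c]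
    congr 1; ext y; simp [tri]
  rw [h1]
  have h2 : ∀ y : ℝ, tri a 0 y = max 0 (1 - |y| / a) := by intro y; simp [tri]
  have h3 : (∫ y : ℝ, tri a 0 y) = 2 * ∫ x in Ioi (0:ℝ), max 0 (1 - x / a) := by
    rw [← integral_comp_abs (f := fun x => max 0 (1 - x / a))]
    simp_rw [h2]
  rw [h3]
  have hcont : Continuous (fun x : ℝ => max 0 (1 - x / a)) := by fun_prop
  have hI1 : IntegrableOn (fun x : ℝ => max 0 (1 - x / a)) (Ioc 0 a) :=
    hcont.integrableOn_Ioc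
  have hI2 : IntegrableOn (fun x : ℝ => max 0 (1 - x / a)) (Ioi a) := by
    apply (integrableOn_congr_fun (g := fun _ => (0:ℝ)) ?_ measurableSet_Ioi).mpr
    · exact integrableOn_zero
    · intro y hy
      have : 1 ≤ y / a := (one_le_div ha).mpr (le_of_lt hy)
      exact max_eq_left (by linarith)
  have h4 : (∫ x in Ioi (0:ℝ), max 0 (1 - x / a)) = ∫ x in Ioc (0:ℝ) a, max 0 (1 - x / a) := by
    rw [← Ioc_union_Ioi_eq_Ioi ha.le,
      setIntegral_union (Ioc_disjoint_Ioi le_rfl) measurableSet_Ioi hI1 hI2]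
    rw [setIntegral_congr_fun measurableSet_Ioi (g := fun _ => (0:ℝ)) ?_]
    · simp
    · intro y hy
      have : 1 ≤ y / a := (one_le_div ha).mpr (le_of_lt hy)
      exact max_eq_left (by linarith)
  rw [h4]
  rw [setIntegral_congr_fun measurableSet_Ioc (g := fun x => 1 - x / a) ?_]
  · rw [← intervalIntegral.integral_of_le ha.le]
    have : (∫ x in (0:ℝ)..a, (1 - x / a)) = a - (a^2 - 0^2)/2/a := by
      rw [intervalIntegral.integral_sub intervalIntegrable_const
          (IntervalIntegrable.div_const intervalIntegral.intervalIntegrable_id a)]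
      rw [intervalIntegral.integral_div, integral_id, intervalIntegral.integral_const]
      simp
    rw [this]; field_simp; ring
  · intro y hy
    have h0 : y / a ≤ 1 := (div_le_one ha).mpr hy.2
    exact max_eq_right (by linarith)

noncomputable def F3 (a₀ a₁ a₂ w₀ w₁ w₂ : ℝ) (y : ℝ) : ℝ :=
  a₀ * tri w₀ 0 y + a₁ * tri w₁ 1 y + a₂ * tri w₂ 10 y

section
variable {a₀ a₁ a₂ w₀ w₁ w₂ : ℝ}
variable (hw₀ : 0 < w₀) (hw₀' : w₀ ≤ 1/4) (hw₁ : 0 < w₁) (hw₁' : w₁ ≤ 1/4)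
  (hw₂ : 0 < w₂) (hw₂' : w₂ ≤ 4)

lemma continuous_F3 : Continuous (F3 a₀ a₁ a₂ w₀ w₁ w₂) := by
  unfold F3
  exact ((continuous_const.mul (continuous_tri _ _)).add
    (continuous_const.mul (continuous_tri _ _))).add
    (continuous_const.mul (continuous_tri _ _))

include hw₀ hw₁ hw₂ in
lemma integral_F3 :
    (∫ y : ℝ, F3 a₀ a₁ a₂ w₀ w₁ w₂ y) = a₀ * w₀ + a₁ * w₁ + a₂ * w₂ := by
  unfold F3
  rw [integral_add (f := fun y => a₀ * tri w₀ 0 y + a₁ * tri w₁ 1 y)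
      (g := fun y => a₂ * tri w₂ 10 y)
      (((integrable_tri _ _ hw₀).const_mul _).add ((integrable_tri _ _ hw₁).const_mul _))
      ((integrable_tri _ _ hw₂).const_mul _),
    integral_add (f := fun y => a₀ * tri w₀ 0 y) (g := fun y => a₁ * tri w₁ 1 y)
      ((integrable_tri _ _ hw₀).const_mul _) ((integrable_tri _ _ hw₁).const_mul _),
    integral_const_mul, integral_const_mul, integral_const_mul,
    integral_tri _ _ hw₀, integral_tri _ _ hw₁, integral_tri _ _ hw₂]

lemma F3_nonneg (h0 : 0 ≤ a₀) (h1 : 0 ≤ a₁) (h2 : 0 ≤ a₂) (y : ℝ) :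
    0 ≤ F3 a₀ a₁ a₂ w₀ w₁ w₂ y := by
  unfold F3
  have := tri_nonneg w₀ 0 y; have := tri_nonneg w₁ 1 y; have := tri_nonneg w₂ 10 y
  positivity

-- value at 0 and 1
include hw₁ hw₁' hw₂ hw₂' in
lemma F3_apply_zero : F3 a₀ a₁ a₂ w₀ w₁ w₂ 0 = a₀ := by
  have h1 : tri w₁ 1 (0:ℝ) = 0 := tri_eq_zero _ _ _ hw₁ (by rw [show |(0:ℝ)-1| = 1 by norm_num]; linarith)
  have h2 : tri w₂ 10 (0:ℝ) = 0 := tri_eq_zero _ _ _ hw₂ (by rw [show |(0:ℝ)-10| = 10 by norm_num]; linarith)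
  unfold F3; rw [tri_self, h1, h2]; ring

include hw₀ hw₀' hw₂ hw₂' in
lemma F3_apply_one : F3 a₀ a₁ a₂ w₀ w₁ w₂ 1 = a₁ := by
  have h1 : tri w₀ 0 (1:ℝ) = 0 := tri_eq_zero _ _ _ hw₀ (by rw [show |(1:ℝ)-0| = 1 by norm_num]; linarith)
  have h2 : tri w₂ 10 (1:ℝ) = 0 := tri_eq_zero _ _ _ hw₂ (by rw [show |(1:ℝ)-10| = 9 by norm_num]; linarith)
  unfold F3; rw [tri_self, h1, h2]; ring

-- strict max at 0
include hw₀ hw₀' hw₁ hw₁' hw₂ hw₂' in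
lemma F3_lt_zero (ha₀ : 0 < a₀) (h01 : a₁ < a₀) (h02 : a₂ < a₀)
    (h1 : 0 ≤ a₁) (h2 : 0 ≤ a₂) (y : ℝ) (hy : y ≠ 0) :
    F3 a₀ a₁ a₂ w₀ w₁ w₂ y < a₀ := by
  rcases lt_or_ge |y - 0| w₀ with hc | hc
  · have e1 : tri w₁ 1 y = 0 := by
      apply tri_eq_zero _ _ _ hw₁
      rw [sub_zero] at hc
      have : 3/4 ≤ |y - 1| := by
        rcases abs_lt.mp hc with ⟨hl, hr⟩
        rw [abs_sub_comm, abs_of_pos (by linarith)]; linarith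
      linarith
    have e2 : tri w₂ 10 y = 0 := by
      apply tri_eq_zero _ _ _ hw₂
      rw [sub_zero] at hc
      have : 9 ≤ |y - 10| := by
        rcases abs_lt.mp hc with ⟨hl, hr⟩
        rw [abs_sub_comm, abs_of_pos (by linarith)]; linarith
      linarith
    unfold F3; rw [e1, e2]
    have := tri_lt_one w₀ 0 y hw₀ hy
    nlinarith [tri_nonneg w₀ 0 y]
  · have e0 : tri w₀ 0 y = 0 := tri_eq_zero _ _ _ hw₀ hc
    rcases lt_or_ge |y - 1| w₁ with hc1 | hc1
    · have e2 : tri w₂ 10 y = 0 := by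
        apply tri_eq_zero _ _ _ hw₂
        have : 8 ≤ |y - 10| := by
          rcases abs_lt.mp hc1 with ⟨hl, hr⟩
          rw [abs_sub_comm, abs_of_pos (by linarith)]; linarith
        linarith
      unfold F3; rw [e0, e2]
      have hle := tri_le_one w₁ 1 y hw₁
      nlinarith [tri_nonneg w₁ 1 y]
    · have e1 : tri w₁ 1 y = 0 := tri_eq_zero _ _ _ hw₁ hc1
      unfold F3; rw [e0, e1]
      have hle := tri_le_one w₂ 10 y hw₂
      nlinarith [tri_nonneg w₂ 10 y]

-- strict max at 1
include hw₀ hw₀' hw₁ hw₁' hw₂ hw₂' in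
lemma F3_lt_one (ha₁ : 0 < a₁) (h01 : a₀ < a₁) (h02 : a₂ < a₁)
    (h0 : 0 ≤ a₀) (h2 : 0 ≤ a₂) (y : ℝ) (hy : y ≠ 1) :
    F3 a₀ a₁ a₂ w₀ w₁ w₂ y < a₁ := by
  rcases lt_or_ge |y - 1| w₁ with hc | hc
  · have e0 : tri w₀ 0 y = 0 := by
      apply tri_eq_zero _ _ _ hw₀
      have : 3/4 ≤ |y - 0| := by
        rcases abs_lt.mp hc with ⟨hl, hr⟩
        rw [sub_zero, abs_of_pos (by linarith)]; linarith
      linarith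
    have e2 : tri w₂ 10 y = 0 := by
      apply tri_eq_zero _ _ _ hw₂
      have : 8 ≤ |y - 10| := by
        rcases abs_lt.mp hc with ⟨hl, hr⟩
        rw [abs_sub_comm, abs_of_pos (by linarith)]; linarith
      linarith
    unfold F3; rw [e0, e2]
    have := tri_lt_one w₁ 1 y hw₁ hy
    nlinarith [tri_nonneg w₁ 1 y]
  · have e1 : tri w₁ 1 y = 0 := tri_eq_zero _ _ _ hw₁ hc
    rcases lt_or_ge |y - 0| w₀ with hc0 | hc0
    · have e2 : tri w₂ 10 y = 0 := by
        apply tri_eq_zero _ _ _ hw₂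
        rw [sub_zero] at hc0
        have : 9 ≤ |y - 10| := by
          rcases abs_lt.mp hc0 with ⟨hl, hr⟩
          rw [abs_sub_comm, abs_of_pos (by linarith)]; linarith
        linarith
      unfold F3; rw [e1, e2]
      have hle := tri_le_one w₀ 0 y hw₀
      nlinarith [tri_nonneg w₀ 0 y]
    · have e0 : tri w₀ 0 y = 0 := tri_eq_zero _ _ _ hw₀ hc0
      unfold F3; rw [e0, e1]
      have hle := tri_le_one w₂ 10 y hw₂
      nlinarith [tri_nonneg w₂ 10 y]

include hw₀ hw₀' hw₁ hw₁' hw₂ hw₂' in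
lemma isF1_F3_zero (ha₀ : 0 < a₀) (h01 : a₁ < a₀) (h02 : a₂ < a₀)
    (h1 : 0 ≤ a₁) (h2 : 0 ≤ a₂)
    (hint : a₀ * w₀ + a₁ * w₁ + a₂ * w₂ = 1) :
    IsF1Density (F3 a₀ a₁ a₂ w₀ w₁ w₂) 0 := by
  refine ⟨continuous_F3, F3_nonneg ha₀.le h1 h2, ?_, ?_⟩
  · rw [integral_F3 hw₀ hw₁ hw₂]; exact hint
  · intro x hx
    rw [F3_apply_zero hw₁ hw₁' hw₂ hw₂']
    exact F3_lt_zero hw₀ hw₀' hw₁ hw₁' hw₂ hw₂' ha₀ h01 h02 h1 h2 x hx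

include hw₀ hw₀' hw₁ hw₁' hw₂ hw₂' in
lemma isF1_F3_one (ha₁ : 0 < a₁) (h01 : a₀ < a₁) (h02 : a₂ < a₁)
    (h0 : 0 ≤ a₀) (h2 : 0 ≤ a₂)
    (hint : a₀ * w₀ + a₁ * w₁ + a₂ * w₂ = 1) :
    IsF1Density (F3 a₀ a₁ a₂ w₀ w₁ w₂) 1 := by
  refine ⟨continuous_F3, F3_nonneg h0 ha₁.le h2, ?_, ?_⟩
  · rw [integral_F3 hw₀ hw₁ hw₂]; exact hint
  · intro x hx
    rw [F3_apply_one hw₀ hw₀' hw₂ hw₂']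
    exact F3_lt_one hw₀ hw₀' hw₁ hw₁' hw₂ hw₂' ha₁ h01 h02 h0 h2 x hx

end



noncomputable def Fdom : ℝ → ℝ := F3 (9/8) (7/8) (1/8) (1/4) (1/4) 4

lemma isF1_Fdom : IsF1Density Fdom 0 := by
  apply isF1_F3_zero <;> norm_num

lemma Fdom_dom_zero {a : ℝ} (ha : 0 < a) (ha' : a ≤ 1/4) (y : ℝ) :
    tri a 0 y ≤ 8 * Fdom y := by
  have h1 : tri a 0 y ≤ tri (1/4) 0 y := tri_mono_width _ _ _ _ ha ha'
  have h2 := tri_nonneg (1/4) 1 y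
  have h3 := tri_nonneg 4 10 y
  have h4 := tri_nonneg (1/4) 0 y
  unfold Fdom F3; nlinarith

lemma Fdom_dom_one {a : ℝ} (ha : 0 < a) (ha' : a ≤ 1/4) (y : ℝ) :
    tri a 1 y ≤ 8 * Fdom y := by
  have h1 : tri a 1 y ≤ tri (1/4) 1 y := tri_mono_width _ _ _ _ ha ha'
  have h2 := tri_nonneg (1/4) 0 y
  have h3 := tri_nonneg 4 10 y
  have h4 := tri_nonneg (1/4) 1 y
  unfold Fdom F3; nlinarith

lemma Fdom_dom_ten {a : ℝ} (ha : 0 < a) (ha' : a ≤ 4) (y : ℝ) :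
    tri a 10 y ≤ 8 * Fdom y := by
  have h1 : tri a 10 y ≤ tri 4 10 y := tri_mono_width _ _ _ _ ha ha'
  have h2 := tri_nonneg (1/4) 0 y
  have h3 := tri_nonneg (1/4) 1 y
  have h4 := tri_nonneg 4 10 y
  unfold Fdom F3; nlinarith

section
variable {s : ℝ × ℝ → ℝ} (hs : StrictlyF1Consistent s)

include hs in
lemma integrable_s_tri (x a c : ℝ) (hdom : ∀ y, tri a c y ≤ 8 * Fdom y) :
    Integrable (fun y => s (x, y) * tri a c y) := by
  have hF : MemF1 Fdom := ⟨0, isF1_Fdom⟩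
  have hint : Integrable (fun y => 8 * (|s (x, y)| * Fdom y)) := (hs.2.1 x Fdom hF).const_mul 8
  apply Integrable.mono' hint
  · exact ((hs.1.comp measurable_prodMk_left).mul
      (continuous_tri a c).measurable).aestronglyMeasurable
  · filter_upwards with y
    rw [Real.norm_eq_abs, abs_mul, abs_of_nonneg (tri_nonneg a c y)]
    calc |s (x, y)| * tri a c y ≤ |s (x, y)| * (8 * Fdom y) :=
          mul_le_mul_of_nonneg_left (hdom y) (abs_nonneg _)
      _ = 8 * (|s (x, y)| * Fdom y) := by ring

/-- expected score of a piece -/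
noncomputable def SI (s : ℝ × ℝ → ℝ) (x a c : ℝ) : ℝ := ∫ y : ℝ, s (x, y) * tri a c y

include hs in
lemma score_expand (x a₀ a₁ a₂ w₀ w₁ w₂ : ℝ)
    (hw₀ : 0 < w₀) (hw₀' : w₀ ≤ 1/4) (hw₁ : 0 < w₁) (hw₁' : w₁ ≤ 1/4)
    (hw₂ : 0 < w₂) (hw₂' : w₂ ≤ 4) :
    (∫ y : ℝ, s (x, y) * F3 a₀ a₁ a₂ w₀ w₁ w₂ y)
      = a₀ * SI s x w₀ 0 + a₁ * SI s x w₁ 1 + a₂ * SI s x w₂ 10 := by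
  have i₀ := integrable_s_tri hs x w₀ 0 (Fdom_dom_zero hw₀ hw₀')
  have i₁ := integrable_s_tri hs x w₁ 1 (Fdom_dom_one hw₁ hw₁')
  have i₂ := integrable_s_tri hs x w₂ 10 (Fdom_dom_ten hw₂ hw₂')
  have heq : (fun y => s (x, y) * F3 a₀ a₁ a₂ w₀ w₁ w₂ y)
      = fun y => (a₀ * (s (x, y) * tri w₀ 0 y) + a₁ * (s (x, y) * tri w₁ 1 y))
          + a₂ * (s (x, y) * tri w₂ 10 y) := by
    funext y; unfold F3; ring
  rw [heq, integral_add (f := fun y => a₀ * (s (x, y) * tri w₀ 0 y) + a₁ * (s (x, y) * tri w₁ 1 y))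
      (g := fun y => a₂ * (s (x, y) * tri w₂ 10 y))
      ((i₀.const_mul a₀).add (i₁.const_mul a₁)) (i₂.const_mul a₂),
    integral_add (f := fun y => a₀ * (s (x, y) * tri w₀ 0 y))
      (g := fun y => a₁ * (s (x, y) * tri w₁ 1 y))
      (i₀.const_mul a₀) (i₁.const_mul a₁),
    integral_const_mul, integral_const_mul, integral_const_mul]
  rfl

noncomputable def kk (s : ℝ × ℝ → ℝ) (a c : ℝ) : ℝ := SI s 1 a c - SI s 0 a c

include hs in
/-- The key identity/inequality from strict consistency along the affine family. -/
lemma key (w₀ w₁ : ℝ) (hw₀ : 0 < w₀) (hw₀' : w₀ ≤ 1/4) (hw₁ : 0 < w₁) (hw₁' : w₁ ≤ 1/4) :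
    kk s w₀ 0 + kk s w₁ 1 + (1/4) * kk s (4*(1-w₀-w₁)) 10 = 0 ∧
    0 < kk s w₀ 0 - (w₀/w₁) * kk s w₁ 1 := by
  set w₂ : ℝ := 4*(1-w₀-w₁) with hw₂def
  have hw₂ : 0 < w₂ := by rw [hw₂def]; linarith
  have hw₂' : w₂ ≤ 4 := by rw [hw₂def]; linarith
  set E : ℝ := kk s w₀ 0 + kk s w₁ 1 + (1/4) * kk s w₂ 10 with hE
  set c : ℝ := kk s w₀ 0 - (w₀/w₁) * kk s w₁ 1 with hc
  -- the signed inequality for each admissible t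
  have main : ∀ t : ℝ, t ≠ 0 → |t| ≤ w₁ → (0 < t → 0 < E + t * c) ∧ (t < 0 → E + t * c < 0) := by
    intro t ht htw
    have hr : (w₀/w₁) * w₁ = w₀ := by field_simp
    have hrt : |(w₀/w₁) * t| ≤ w₀ := by
      rw [abs_mul, abs_of_pos (div_pos hw₀ hw₁)]
      calc w₀/w₁ * |t| ≤ w₀/w₁ * w₁ := by
            apply mul_le_mul_of_nonneg_left htw (div_pos hw₀ hw₁).le
        _ = w₀ := hr
    have habs := abs_le.mp htw
    have habs' := abs_le.mp hrt
    set ft : ℝ → ℝ := F3 (1+t) (1-(w₀/w₁)*t) (1/4) w₀ w₁ w₂ with hft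
    have hint : (1+t) * w₀ + (1-(w₀/w₁)*t) * w₁ + (1/4) * w₂ = 1 := by
      rw [hw₂def]; field_simp; ring
    have hS : ∀ x : ℝ, (∫ y : ℝ, s (x, y) * ft y)
        = (1+t) * SI s x w₀ 0 + (1-(w₀/w₁)*t) * SI s x w₁ 1 + (1/4) * SI s x w₂ 10 :=
      fun x => score_expand hs x _ _ _ _ _ _ hw₀ hw₀' hw₁ hw₁' hw₂ hw₂'
    have hdiff : (∫ y : ℝ, s (1, y) * ft y) - (∫ y : ℝ, s (0, y) * ft y) = E + t * c := by
      rw [hS 1, hS 0, hE, hc]; unfold kk; ring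
    constructor
    · intro htpos
      have hf1 : IsF1Density ft 0 := by
        apply isF1_F3_zero hw₀ hw₀' hw₁ hw₁' hw₂ hw₂' (by linarith) ?_ (by linarith) ?_ (by norm_num)
          hint
        · nlinarith [div_pos hw₀ hw₁]
        · linarith
      have hcons := hs.2.2 ft 0 hf1 1
      have hlt : (∫ y : ℝ, s (0, y) * ft y) < (∫ y : ℝ, s (1, y) * ft y) := by
        rcases hcons with ⟨hle, heq⟩
        rcases lt_or_eq_of_le hle with h | h
        · exact h
        · exact absurd (heq h) one_ne_zero
      linarith [hdiff]
    · intro htneg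
      have hf1 : IsF1Density ft 1 := by
        apply isF1_F3_one hw₀ hw₀' hw₁ hw₁' hw₂ hw₂' ?_ ?_ ?_ (by linarith) (by norm_num) hint
        · linarith
        · nlinarith [div_pos hw₀ hw₁]
        · linarith
      have hcons := hs.2.2 ft 1 hf1 0
      have hlt : (∫ y : ℝ, s (1, y) * ft y) < (∫ y : ℝ, s (0, y) * ft y) := by
        rcases hcons with ⟨hle, heq⟩
        rcases lt_or_eq_of_le hle with h | h
        · exact h
        · exact absurd (heq h) zero_ne_one
      linarith [hdiff]
  have hEzero : E = 0 := by
    by_contra hne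
    rcases lt_or_gt_of_ne hne with hneg | hpos
    · -- E < 0 : use small positive t
      set t : ℝ := min w₁ ((-E)/(|c|+1)) with htdef
      have htpos : 0 < t := lt_min hw₁ (div_pos (by linarith) (by positivity))
      have h1 := (main t htpos.ne' (by rw [abs_of_pos htpos]; exact min_le_left _ _)).1 htpos
      have htc : t * c ≤ t * |c| := mul_le_mul_of_nonneg_left (le_abs_self c) htpos.le
      have ht2 : t * |c| < -E := by
        calc t * |c| ≤ ((-E)/(|c|+1)) * |c| := by
              apply mul_le_mul_of_nonneg_right (min_le_right _ _) (abs_nonneg c)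
          _ < -E := by
              rw [div_mul_eq_mul_div, div_lt_iff₀ (by positivity)]
              nlinarith [abs_nonneg c]
      linarith
    · set t : ℝ := min w₁ (E/(|c|+1)) with htdef
      have htpos : 0 < t := lt_min hw₁ (div_pos hpos (by positivity))
      have h1 := (main (-t) (by linarith) (by rw [abs_neg, abs_of_pos htpos]; exact min_le_left _ _)).2 (by linarith)
      have htc : t * c ≤ t * |c| := mul_le_mul_of_nonneg_left (le_abs_self c) htpos.le
      have hrw : E + (-t) * c = E - t * c := by ring
      rw [hrw] at h1
      have ht2 : t * |c| < E := by
        calc t * |c| ≤ (E/(|c|+1)) * |c| := by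
              apply mul_le_mul_of_nonneg_right (min_le_right _ _) (abs_nonneg c)
          _ < E := by
              rw [div_mul_eq_mul_div, div_lt_iff₀ (by positivity)]
              nlinarith [abs_nonneg c]
      linarith
  refine ⟨hEzero, ?_⟩
  have h1 := (main w₁ hw₁.ne' (by rw [abs_of_pos hw₁])).1 hw₁
  rw [hEzero] at h1
  nlinarith

end



noncomputable def wseq (n : ℕ) : ℝ := (1/4) * (1/(n+1))

lemma wseq_pos (n : ℕ) : 0 < wseq n := by unfold wseq; positivity

lemma wseq_le (n : ℕ) : wseq n ≤ 1/4 := by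
  unfold wseq
  have h1 : (1:ℝ)/(n+1) ≤ 1 := by
    rw [div_le_one (by positivity)]
    simp
  nlinarith

lemma wseq_tendsto : Tendsto wseq atTop (𝓝 0) := by
  have := tendsto_one_div_add_atTop_nhds_zero_nat (𝕜 := ℝ)
  have h := this.const_mul (1/4 : ℝ)
  rw [mul_zero] at h
  exact h

section
variable {s : ℝ × ℝ → ℝ} (hs : StrictlyF1Consistent s)

include hs in
lemma tendsto_SI (x c : ℝ) (hdom : ∀ a : ℝ, 0 < a → a ≤ 1/4 → ∀ y, tri a c y ≤ 8 * Fdom y) :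
    Tendsto (fun n : ℕ => SI s x (wseq n) c) atTop (𝓝 0) := by
  have hbi : Integrable (fun y => 8 * (|s (x, y)| * Fdom y)) :=
    (hs.2.1 x Fdom ⟨0, isF1_Fdom⟩).const_mul 8
  have h0 : (0:ℝ) = ∫ _ : ℝ, (0:ℝ) := by simp
  rw [h0]
  apply MeasureTheory.tendsto_integral_of_dominated_convergence
      (bound := fun y => 8 * (|s (x, y)| * Fdom y))
  · intro n
    exact ((hs.1.comp measurable_prodMk_left).mul
      (continuous_tri (wseq n) c).measurable).aestronglyMeasurable
  · exact hbi
  · intro n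
    filter_upwards with y
    rw [Real.norm_eq_abs, abs_mul, abs_of_nonneg (tri_nonneg _ c y)]
    calc |s (x, y)| * tri (wseq n) c y ≤ |s (x, y)| * (8 * Fdom y) :=
          mul_le_mul_of_nonneg_left (hdom _ (wseq_pos n) (wseq_le n) y) (abs_nonneg _)
      _ = 8 * (|s (x, y)| * Fdom y) := by ring
  · have hae : ∀ᵐ y : ℝ, y ≠ c := by
      rw [ae_iff]
      have : {y : ℝ | ¬ y ≠ c} = {c} := by ext y; simp
      rw [this]
      exact Real.volume_singleton
    filter_upwards [hae] with y hy
    have hev : ∀ᶠ n in atTop, s (x, y) * tri (wseq n) c y = 0 := by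
      have hpos : 0 < |y - c| := abs_pos.mpr (sub_ne_zero.mpr hy)
      filter_upwards [wseq_tendsto.eventually (gt_mem_nhds hpos)] with n hn
      rw [tri_eq_zero _ _ _ (wseq_pos n) hn.le, mul_zero]
    exact Tendsto.congr' (by filter_upwards [hev] with n hn; exact hn.symm) tendsto_const_nhds

include hs in
lemma no_strict : False := by
  -- constant difference d
  set d : ℝ := kk s (1/4) 0 - kk s (1/4) 1 with hd
  have hd_pos : 0 < d := by
    have h := (key hs (1/4) (1/4) (by norm_num) le_rfl (by norm_num) le_rfl).2
    rw [hd]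
    have : (1/4 : ℝ)/(1/4) = 1 := by norm_num
    rw [this] at h; linarith
  have hconst : ∀ n : ℕ, kk s (wseq n) 0 - kk s (wseq n) 1 = d := by
    intro n
    have h1 := (key hs (wseq n) (1/4) (wseq_pos n) (wseq_le n) (by norm_num) le_rfl).1
    have h2 := (key hs (1/4) (wseq n) (by norm_num) le_rfl (wseq_pos n) (wseq_le n)).1
    have he : (4*(1-wseq n-1/4) : ℝ) = 4*(1-1/4-wseq n) := by ring
    rw [he] at h1
    rw [hd]; linarith
  have ht0 : Tendsto (fun n : ℕ => kk s (wseq n) 0) atTop (𝓝 0) := by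
    have h1 := tendsto_SI hs 1 0 (fun a ha ha' y => Fdom_dom_zero ha ha' y)
    have h0 := tendsto_SI hs 0 0 (fun a ha ha' y => Fdom_dom_zero ha ha' y)
    have := h1.sub h0
    rw [sub_zero] at this
    exact this
  have ht1 : Tendsto (fun n : ℕ => kk s (wseq n) 1) atTop (𝓝 0) := by
    have h1 := tendsto_SI hs 1 1 (fun a ha ha' y => Fdom_dom_one ha ha' y)
    have h0 := tendsto_SI hs 0 1 (fun a ha ha' y => Fdom_dom_one ha ha' y)
    have := h1.sub h0
    rw [sub_zero] at this
    exact this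
  have htd : Tendsto (fun n : ℕ => kk s (wseq n) 0 - kk s (wseq n) 1) atTop (𝓝 0) := by
    have := ht0.sub ht1; rw [sub_zero] at this; exact this
  have : Tendsto (fun _ : ℕ => d) atTop (𝓝 0) := by
    apply htd.congr
    intro n; exact (hconst n)
  have hd0 : d = 0 := tendsto_nhds_unique tendsto_const_nhds this
  linarith

end


/-- 𝓕₁ contains 𝓕₀, and the mode is not elicitable relative to 𝓕₁. -/
theorem mode_not_elicitable_F1 :
    (∀ f : ℝ → ℝ, MemF0 f → MemF1 f) ∧
    ¬ ∃ s : ℝ × ℝ → ℝ, StrictlyF1Consistent s := by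
  constructor
  · rintro f ⟨x₀, h⟩
    exact ⟨x₀, h.1, h.2.1, h.2.2.1, h.2.2.2.2.2⟩
  · rintro ⟨s, hs⟩
    exact no_strict hs
end
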